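/- arXiv:1908.10627 — 4 statements merged into one kernel-verified Lean document; each statement's English description precedes it below -/
import Mathlib

section
/- Let σ be a primitive m-uniform substitution (m ≥ 2) on a finite alphabet A with an aperiodic fixed point x. Then there exists a constant C = C(σ) such that for every infinite word y in the shift orbit closure X(σ) and all n ∈ ℕ and k ≥ 1, y contains a k-anti-power with block length at most C·k starting at position n. -/
/-- Extension of a substitution (given by its images of letters) to finite words. -/
def substWord {A : Type*} (σ : A → List A) (w : List A) : List A :=
  w.flatMap σ

/-- `substIter σ n a` is the word `σ^n(a)`. -/
def substIter {A : Type*} (σ : A → List A) (n : ℕ) (a : A) : List A :=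
  (substWord σ)^[n] [a]

/-- `σ` is `m`-uniform: every letter has image of length `m`. -/
def IsUniform {A : Type*} (σ : A → List A) (m : ℕ) : Prop :=
  ∀ a, (σ a).length = m

/-- `σ` is primitive: some power `σ^n` maps every letter to a word containing every letter. -/
def IsPrimitive {A : Type*} (σ : A → List A) : Prop :=
  ∃ n, 1 ≤ n ∧ ∀ a b, b ∈ substIter σ n a

/-- Application of an `m`-uniform substitution to an infinite word, letter by letter. -/
def substInf {A : Type*} [Inhabited A] (σ : A → List A) (m : ℕ) (x : ℕ → A) : ℕ → A :=
  fun n => (σ (x (n / m))).getD (n % m) default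

/-- The factor `x[i .. i+len-1]` of an infinite word `x`. -/
def subword {A : Type*} (x : ℕ → A) (i len : ℕ) : List A :=
  (List.range len).map fun j => x (i + j)

/-- `w` is a factor of the infinite word `x`. -/
def FactorOf {A : Type*} (w : List A) (x : ℕ → A) : Prop :=
  ∃ i, subword x i w.length = w

/-- An infinite word is eventually periodic. -/
def EventuallyPeriodic {A : Type*} (x : ℕ → A) : Prop :=
  ∃ p, 1 ≤ p ∧ ∃ N, ∀ n, N ≤ n → x (n + p) = x n

/-- An infinite word is aperiodic if it is not eventually periodic. -/
def IsAperiodic {A : Type*} (x : ℕ → A) : Prop :=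
  ¬ EventuallyPeriodic x

/-- The shift orbit closure of an infinite word, in the product topology on `ℕ → A`. -/
def shiftOrbitClosure {A : Type*} [TopologicalSpace A] (x : ℕ → A) : Set (ℕ → A) :=
  closure {y | ∃ n : ℕ, y = fun k => x (k + n)}

/-- `y` contains a `k`-anti-power with block length `d` starting at position `n`:
the `k` consecutive blocks of length `d` starting at `n` are pairwise distinct. -/
def HasAntipower {A : Type*} (y : ℕ → A) (n k d : ℕ) : Prop :=
  ∀ i < k, ∀ j < k, i ≠ j →
    subword y (n + i * d) d ≠ subword y (n + j * d) d

namespace APf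

variable {A : Type*}

lemma length_flatMap_uniform (f : A → List A) (B : ℕ) (hf : ∀ a, (f a).length = B) :
    ∀ l : List A, (l.flatMap f).length = l.length * B
  | [] => by simp
  | a :: l => by
      simp [List.flatMap_cons, length_flatMap_uniform f B hf l, hf a, Nat.succ_mul]
      omega

lemma take_flatMap_uniform (f : A → List A) (B : ℕ) (hf : ∀ a, (f a).length = B) :
    ∀ (l : List A) (n : ℕ), (l.take n).flatMap f = (l.flatMap f).take (n * B)
  | [], n => by simp
  | a :: l, 0 => by simp
  | a :: l, (n+1) => by
      rw [List.take_succ_cons, List.flatMap_cons, List.flatMap_cons,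
        show (n+1) * B = (f a).length + n * B by rw [hf a]; ring,
        List.take_length_add_append, take_flatMap_uniform f B hf l n]

lemma drop_flatMap_uniform (f : A → List A) (B : ℕ) (hf : ∀ a, (f a).length = B) :
    ∀ (l : List A) (n : ℕ), (l.drop n).flatMap f = (l.flatMap f).drop (n * B)
  | [], n => by simp
  | a :: l, 0 => by simp
  | a :: l, (n+1) => by
      rw [List.drop_succ_cons, List.flatMap_cons,
        show (n+1) * B = (f a).length + n * B by rw [hf a]; ring,
        List.drop_length_add_append, drop_flatMap_uniform f B hf l n]

lemma iterate_substWord (σ : A → List A) : ∀ (t : ℕ) (l : List A),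
    (substWord σ)^[t] l = l.flatMap (substIter σ t)
  | 0, l => by
      simp only [Function.iterate_zero, id]
      exact (List.flatMap_singleton' l).symm
  | (t+1), l => by
      rw [Function.iterate_succ_apply, iterate_substWord σ t (substWord σ l)]
      show (l.flatMap σ).flatMap _ = _
      rw [List.flatMap_assoc]
      congr 1
      funext a
      show _ = substIter σ (t+1) a
      rw [substIter, Function.iterate_succ_apply]
      rw [iterate_substWord σ t (substWord σ [a])]
      congr 1
      simp [substWord]

lemma substIter_one (σ : A → List A) (a : A) : substIter σ 1 a = σ a := by
  simp [substIter, substWord]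

lemma substIter_add (σ : A → List A) (t r : ℕ) (a : A) :
    substIter σ (t + r) a = (substIter σ t a).flatMap (substIter σ r) := by
  rw [substIter, Nat.add_comm t r, Function.iterate_add_apply]
  rw [iterate_substWord σ r ((substWord σ)^[t] [a])]
  rfl

lemma substIter_length {σ : A → List A} {m : ℕ} (hunif : IsUniform σ m) (t : ℕ) (a : A) :
    (substIter σ t a).length = m ^ t := by
  induction t generalizing a with
  | zero => simp [substIter]
  | succ t ih =>
      rw [show t + 1 = 1 + t by ring, substIter_add, substIter_one]
      rw [length_flatMap_uniform (substIter σ t) (m ^ t) (fun b => ih b), hunif a]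
      ring

lemma subword_length (x : ℕ → A) (i L : ℕ) : (subword x i L).length = L := by
  simp [subword, List.range_succ]

@[simp] lemma subword_getElem (x : ℕ → A) (i L w : ℕ) (h : w < (subword x i L).length) :
    (subword x i L)[w] = x (i + w) := by
  simp [subword, List.range_succ]

lemma subword_congr {x x' : ℕ → A} {a b L : ℕ} (h : ∀ w < L, x (a + w) = x' (b + w)) :
    subword x a L = subword x' b L := by
  apply List.ext_getElem (by simp [subword_length])
  intro w h1 h2
  rw [subword_getElem, subword_getElem]
  exact h w (by simpa [subword_length] using h1)

lemma subword_eq_pointwise {x x' : ℕ → A} {a b L : ℕ}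
    (h : subword x a L = subword x' b L) : ∀ w < L, x (a + w) = x' (b + w) := by
  intro w hw
  have h1 : w < (subword x a L).length := by simpa [subword_length] using hw
  have h2 : w < (subword x' b L).length := by simpa [subword_length] using hw
  rw [← subword_getElem x a L w h1, ← subword_getElem x' b L w h2]
  exact List.getElem_of_eq h h1

lemma subword_append (x : ℕ → A) (i L₁ L₂ : ℕ) :
    subword x i (L₁ + L₂) = subword x i L₁ ++ subword x (i + L₁) L₂ := by
  apply List.ext_getElem (by simp [subword_length])
  intro w h1 h2
  rw [subword_getElem]
  rw [List.getElem_append]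
  split
  · rw [subword_getElem]
  · next h' =>
      rw [subword_length] at h'
      rw [subword_getElem]
      congr 1
      simp only [subword_length]
      omega

lemma subword_one (x : ℕ → A) (i : ℕ) : subword x i 1 = [x i] := by
  simp [subword, List.range_succ]

lemma subword_cons (x : ℕ → A) (i L : ℕ) :
    subword x i (L + 1) = x i :: subword x (i + 1) L := by
  rw [show L + 1 = 1 + L by ring, subword_append, subword_one]
  rfl

lemma subword_drop_take (x : ℕ → A) {s o ℓ L : ℕ} (h : o + ℓ ≤ L) :
    ((subword x s L).drop o).take ℓ = subword x (s + o) ℓ := by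
  apply List.ext_getElem
  · simp [subword_length]; omega
  · intro w h1 h2
    rw [List.getElem_take, List.getElem_drop, subword_getElem, subword_getElem]
    congr 1
    ring

variable [Inhabited A]

lemma block1 {σ : A → List A} {m : ℕ} (hm0 : 0 < m)
    (hunif : IsUniform σ m) {x : ℕ → A} (hfix : substInf σ m x = x) (c : ℕ) :
    subword x (c * m) m = σ (x c) := by
  apply List.ext_getElem (by rw [subword_length, hunif])
  intro w h1 h2
  have hw : w < m := by simpa [subword_length] using h1
  rw [subword_getElem]
  have hx : x (c * m + w) = (σ (x ((c * m + w) / m))).getD ((c * m + w) % m) default :=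
    (congrFun hfix (c * m + w)).symm
  have hdiv : (c * m + w) / m = c := by
    rw [Nat.mul_comm c m, Nat.mul_add_div hm0]
    simp [Nat.div_eq_of_lt hw]
  have hmod : (c * m + w) % m = w := by
    rw [Nat.mul_comm c m, Nat.mul_add_mod]
    exact Nat.mod_eq_of_lt hw
  rw [hx, hdiv, hmod, List.getD_eq_getElem _ _ (by rw [hunif]; exact hw)]

lemma aligned1 {σ : A → List A} {m : ℕ} (hm0 : 0 < m)
    (hunif : IsUniform σ m) {x : ℕ → A} (hfix : substInf σ m x = x) (c L : ℕ) :
    subword x (c * m) (L * m) = (subword x c L).flatMap σ := by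
  induction L generalizing c with
  | zero => simp [subword]
  | succ L ih =>
      rw [subword_cons, List.flatMap_cons, ← block1 hm0 hunif hfix c, ← ih (c+1),
        show (L+1)*m = m + L*m by ring, subword_append, show c*m + m = (c+1)*m by ring]

lemma aligned {σ : A → List A} {m : ℕ} (hm0 : 0 < m)
    (hunif : IsUniform σ m) {x : ℕ → A} (hfix : substInf σ m x = x) (t c L : ℕ) :
    subword x (c * m ^ t) (L * m ^ t) = (subword x c L).flatMap (substIter σ t) := by
  induction t generalizing c L with
  | zero =>
      simp only [pow_zero, Nat.mul_one]
      exact (List.flatMap_singleton' _).symm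
  | succ t ih =>
      have e1 : c * m ^ (t+1) = (c * m) * m ^ t := by ring
      have e2 : L * m ^ (t+1) = (L * m) * m ^ t := by ring
      rw [e1, e2, ih (c*m) (L*m), aligned1 hm0 hunif hfix c L, List.flatMap_assoc]
      congr 1
      funext a
      rw [show t+1 = 1 + t by ring, substIter_add, substIter_one]

lemma occ {σ : A → List A} {m : ℕ} (hm0 : 0 < m)
    (hunif : IsUniform σ m) {x : ℕ → A} (hfix : substInf σ m x = x) (t i : ℕ) :
    subword x (i * m ^ t) (m ^ t) = substIter σ t (x i) := by
  have h := aligned hm0 hunif hfix t i 1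
  rw [Nat.one_mul, subword_one, List.flatMap_singleton] at h
  exact h

lemma occ_getD {σ : A → List A} {m : ℕ} (hm0 : 0 < m)
    (hunif : IsUniform σ m) {x : ℕ → A} (hfix : substInf σ m x = x) (t i w : ℕ)
    (hw : w < m ^ t) :
    x (i * m ^ t + w) = (substIter σ t (x i)).getD w default := by
  have hlen : w < (subword x (i * m ^ t) (m ^ t)).length := by rw [subword_length]; exact hw
  calc x (i * m ^ t + w) = (subword x (i * m ^ t) (m ^ t))[w] := (subword_getElem _ _ _ _ hlen).symm
    _ = (substIter σ t (x i))[w]'(by rw [substIter_length hunif]; exact hw) :=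
        List.getElem_of_eq (occ hm0 hunif hfix t i) hlen
    _ = (substIter σ t (x i)).getD w default := (List.getD_eq_getElem _ _ _).symm

lemma exists_pow_between {m : ℕ} (hm : 2 ≤ m) (L : ℕ) (hL : 1 ≤ L) :
    ∃ t, L ≤ m ^ t ∧ m ^ t ≤ m * L := by
  have hex : ∃ t, L ≤ m ^ t := ⟨L, le_of_lt (Nat.lt_pow_self (n := L) (by omega))⟩
  classical
  refine ⟨Nat.find hex, Nat.find_spec hex, ?_⟩
  rcases Nat.eq_zero_or_pos (Nat.find hex) with h0 | h0
  · rw [h0, pow_zero]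
    calc 1 ≤ L := hL
      _ ≤ m * L := Nat.le_mul_of_pos_left L (by omega)
  · have hlt : ¬ L ≤ m ^ (Nat.find hex - 1) := Nat.find_min hex (by omega)
    have he : m ^ Nat.find hex = m * m ^ (Nat.find hex - 1) := by
      rw [← pow_succ']
      congr 1
      omega
    rw [he]
    exact Nat.mul_le_mul_left m (by omega)

lemma exists_pair_bound [Fintype A] (x : ℕ → A) :
    ∃ N, ∀ i, ∃ o, o ≤ N ∧ x o = x i ∧ x (o + 1) = x (i + 1) := by
  classical
  refine ⟨Finset.univ.sup (fun pr : A × A => sInf {n | x n = pr.1 ∧ x (n+1) = pr.2}),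
    fun i => ?_⟩
  have hne : ({n | x n = x i ∧ x (n+1) = x (i+1)} : Set ℕ).Nonempty := ⟨i, rfl, rfl⟩
  have hmem := Nat.sInf_mem hne
  exact ⟨_, Finset.le_sup (f := fun pr : A × A => sInf {n | x n = pr.1 ∧ x (n+1) = pr.2})
    (Finset.mem_univ (x i, x (i+1))), hmem.1, hmem.2⟩

lemma linear_recurrence [Fintype A] {σ : A → List A} {m : ℕ} (hm : 2 ≤ m)
    (hunif : IsUniform σ m) (hprim : IsPrimitive σ) {x : ℕ → A}
    (hfix : substInf σ m x = x) :
    ∃ K, 1 ≤ K ∧ ∀ L i q, 1 ≤ L →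
      ∃ o, q ≤ o ∧ o + L ≤ q + K * L ∧ subword x o L = subword x i L := by
  classical
  have hm0 : 0 < m := by omega
  obtain ⟨pp, hpp1, hppmem⟩ := hprim
  obtain ⟨N, hN⟩ := exists_pair_bound x
  obtain ⟨s, hs1, -⟩ := exists_pow_between hm (N + 2) (by omega)
  have hKpos : 1 ≤ 2 * (m ^ pp * m ^ s * m) := by
    have h1 : 0 < m ^ pp * m ^ s * m := by positivity
    omega
  refine ⟨2 * (m ^ pp * m ^ s * m), hKpos, ?_⟩
  intro L i q hL
  obtain ⟨t, htL, htU⟩ := exists_pow_between hm L hL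
  set T := pp + s + t with hTdef
  have hTpow : m ^ T = m ^ pp * m ^ s * m ^ t := by
    rw [hTdef, pow_add, pow_add]
  have hMTpos : 0 < m ^ T := Nat.pow_pos hm0
  have hMtpos : 0 < m ^ t := Nat.pow_pos hm0
  -- decompose i
  set j := i / m ^ t with hjdef
  obtain ⟨e, he, hie⟩ : ∃ e, e < m ^ t ∧ j * m ^ t + e = i :=
    ⟨i % m ^ t, Nat.mod_lt _ hMtpos, by rw [hjdef, Nat.mul_comm]; exact Nat.div_add_mod i (m ^ t)⟩
  obtain ⟨o, hoN, ho1, ho2⟩ := hN j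
  have hos : o + 2 ≤ m ^ s := le_trans (by omega) hs1
  set i' := q / m ^ T + 1 with hi'def
  -- the letter x 0 inside the pp-block of x i'
  have hx0mem : x 0 ∈ substIter σ pp (x i') := hppmem _ _
  obtain ⟨d₀, hd₀len, hd₀⟩ := List.mem_iff_getElem.mp hx0mem
  rw [substIter_length hunif] at hd₀len
  set α := i' * m ^ pp + d₀ with hαdef
  have hxα : x α = x 0 := by
    rw [hαdef, occ_getD hm0 hunif hfix pp i' d₀ hd₀len,
      List.getD_eq_getElem _ _ (by rw [substIter_length hunif]; exact hd₀len), hd₀]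
  set β := α * m ^ s + o with hβdef
  have hxβ : x β = x j := by
    rw [hβdef, occ_getD hm0 hunif hfix s α o (by omega), hxα,
      ← occ_getD hm0 hunif hfix s 0 o (by omega), Nat.zero_mul, Nat.zero_add]
    exact ho1
  have hxβ1 : x (β + 1) = x (j + 1) := by
    have hb1 : β + 1 = α * m ^ s + (o + 1) := by omega
    rw [hb1, occ_getD hm0 hunif hfix s α (o+1) (by omega), hxα,
      ← occ_getD hm0 hunif hfix s 0 (o+1) (by omega), Nat.zero_mul, Nat.zero_add]
    exact ho2
  -- two aligned blocks agree
  have h2b : ∀ w, w < 2 * m ^ t → x (β * m ^ t + w) = x (j * m ^ t + w) := by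
    intro w hw
    rcases Nat.lt_or_ge w (m ^ t) with hw1 | hw1
    · rw [occ_getD hm0 hunif hfix t β w hw1, occ_getD hm0 hunif hfix t j w hw1, hxβ]
    · have hw2 : w - m ^ t < m ^ t := by omega
      have ha : β * m ^ t + w = (β + 1) * m ^ t + (w - m ^ t) := by
        have : (β + 1) * m ^ t = β * m ^ t + m ^ t := by ring
        omega
      have hb : j * m ^ t + w = (j + 1) * m ^ t + (w - m ^ t) := by
        have : (j + 1) * m ^ t = j * m ^ t + m ^ t := by ring
        omega
      rw [ha, hb, occ_getD hm0 hunif hfix t (β+1) _ hw2,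
        occ_getD hm0 hunif hfix t (j+1) _ hw2, hxβ1]
  refine ⟨β * m ^ t + e, ?_, ?_, ?_⟩
  · -- q ≤ position
    have hq : q < i' * m ^ T := by
      have h1 := Nat.div_add_mod q (m ^ T)
      have h2 : q % m ^ T < m ^ T := Nat.mod_lt _ hMTpos
      calc q = m ^ T * (q / m ^ T) + q % m ^ T := h1.symm
        _ < m ^ T * (q / m ^ T) + m ^ T := by omega
        _ = (q / m ^ T + 1) * m ^ T := by ring
    have hc1 : i' * m ^ T ≤ β * m ^ t := by
      have hstep : i' * m ^ pp * m ^ s ≤ β := by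
        calc i' * m ^ pp * m ^ s ≤ α * m ^ s :=
              Nat.mul_le_mul_right _ (Nat.le_add_right _ _)
          _ ≤ β := Nat.le_add_right _ _
      calc i' * m ^ T = i' * m ^ pp * m ^ s * m ^ t := by rw [hTpow]; ring
        _ ≤ β * m ^ t := Nat.mul_le_mul_right _ hstep
    omega
  · -- upper bound
    have hu1 : β * m ^ t + e + L ≤ (β + 2) * m ^ t := by
      have : (β + 2) * m ^ t = β * m ^ t + m ^ t + m ^ t := by ring
      omega
    have hu2 : (β + 2) * m ^ t ≤ (α + 1) * m ^ s * m ^ t := by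
      apply Nat.mul_le_mul_right
      calc β + 2 = α * m ^ s + (o + 2) := by omega
        _ ≤ α * m ^ s + m ^ s := by omega
        _ = (α + 1) * m ^ s := by ring
    have hu3 : (α + 1) * m ^ s * m ^ t ≤ (i' + 1) * m ^ T := by
      rw [hTpow]
      calc (α + 1) * m ^ s * m ^ t ≤ (i' + 1) * m ^ pp * m ^ s * m ^ t := by
            apply Nat.mul_le_mul_right
            apply Nat.mul_le_mul_right
            calc α + 1 = i' * m ^ pp + (d₀ + 1) := by omega
              _ ≤ i' * m ^ pp + m ^ pp := by omega
              _ = (i' + 1) * m ^ pp := by ring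
        _ = (i' + 1) * (m ^ pp * m ^ s * m ^ t) := by ring
    have hu4 : (i' + 1) * m ^ T ≤ q + 2 * m ^ T := by
      have h5 : q / m ^ T * m ^ T ≤ q := Nat.div_mul_le_self _ _
      calc (i' + 1) * m ^ T = q / m ^ T * m ^ T + 2 * m ^ T := by rw [hi'def]; ring
        _ ≤ q + 2 * m ^ T := by omega
    have hu5 : 2 * m ^ T ≤ 2 * (m ^ pp * m ^ s * m) * L := by
      rw [hTpow]
      calc 2 * (m ^ pp * m ^ s * m ^ t) ≤ 2 * (m ^ pp * m ^ s * (m * L)) := by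
            apply Nat.mul_le_mul_left
            apply Nat.mul_le_mul_left
            exact htU
        _ = 2 * (m ^ pp * m ^ s * m) * L := by ring
    omega
  · -- subword equality
    apply subword_congr
    intro w hw
    have hew : e + w < 2 * m ^ t := by omega
    have h1 : β * m ^ t + e + w = β * m ^ t + (e + w) := by omega
    have h2 : j * m ^ t + (e + w) = i + w := by omega
    rw [h1, h2b (e + w) hew, h2]

lemma no_period_of_LR {x : ℕ → A} {K : ℕ}
    (hLR : ∀ L i q, 1 ≤ L → ∃ o, q ≤ o ∧ o + L ≤ q + K * L ∧ subword x o L = subword x i L)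
    (haper : ¬ ∃ p, 1 ≤ p ∧ ∃ N, ∀ n, N ≤ n → x (n + p) = x n) :
    ∀ ρ sp L, 1 ≤ ρ → K * (ρ + 1) + ρ ≤ L →
      (∀ w, w < L → x (sp + w) = x (sp + ρ + w)) → False := by
  intro ρ sp L hρ hKL hper
  apply haper
  refine ⟨ρ, hρ, 0, fun n _ => ?_⟩
  obtain ⟨o, hqo, hoU, hsub⟩ := hLR (ρ + 1) n sp (by omega)
  have hpt := subword_eq_pointwise hsub
  have h0 := hpt 0 (by omega)
  have hρ' := hpt ρ (by omega)
  have hw : o - sp < L := by omega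
  have hper1 := hper (o - sp) hw
  have e1 : sp + (o - sp) = o := by omega
  have e2 : sp + ρ + (o - sp) = o + ρ := by omega
  rw [e1, e2] at hper1
  have e3 : o + 0 = o := by omega
  have e4 : n + 0 = n := by omega
  rw [e3, e4] at h0
  calc x (n + ρ) = x (o + ρ) := hρ'.symm
    _ = x o := hper1.symm
    _ = x n := h0

lemma window_phase [Fintype A] {σ : A → List A} {m : ℕ} (hm : 2 ≤ m)
    (hunif : IsUniform σ m) (hprim : IsPrimitive σ) {x : ℕ → A}
    (hfix : substInf σ m x = x)
    (haper : ¬ ∃ p, 1 ≤ p ∧ ∃ N, ∀ n, N ≤ n → x (n + p) = x n) :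
    ∃ B, 1 ≤ B ∧ ∀ j Δ p D, (∀ w, w < D → x (p + w) = x (p + Δ + w)) →
      B * m ^ j ≤ D → m ^ j ∣ Δ := by
  classical
  have hm0 : 0 < m := by omega
  obtain ⟨K, hK1, hLR⟩ := linear_recurrence hm hunif hprim hfix
  have hNP := no_period_of_LR hLR haper
  set ν := 2 * K + 1 with hν
  set Pc := Fintype.card ((Fin ν → A) × (Fin (ν + 1) → A)) with hPc
  have hB1 : 1 ≤ (ν + 2) * m ^ Pc := by
    have h1 : 0 < (ν + 2) * m ^ Pc := by positivity
    omega
  refine ⟨(ν + 2) * m ^ Pc, hB1, ?_⟩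
  intro j
  induction j with
  | zero => intro Δ p D hw hB; simpa using one_dvd Δ
  | succ j ih =>
      intro Δ p D hw hB
      have hmono : (ν + 2) * m ^ Pc * m ^ j ≤ (ν + 2) * m ^ Pc * m ^ (j+1) :=
        Nat.mul_le_mul_left _ (Nat.pow_le_pow_right (by omega) (by omega))
      have hij : m ^ j ∣ Δ := ih Δ p D hw (le_trans hmono hB)
      by_contra hnd
      -- key facts at each scale t
      have key : ∀ t, j + 1 ≤ t → t ≤ j + 1 + Pc →
          ((subword x (p / m ^ t + 1) ν).flatMap (substIter σ t) =
            (((subword x (((p / m ^ t + 1) * m ^ t + Δ) / m ^ t) (ν + 1)).flatMap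
              (substIter σ t)).drop (((p / m ^ t + 1) * m ^ t + Δ) % m ^ t)).take (ν * m ^ t)) ∧
          m ^ j ∣ ((p / m ^ t + 1) * m ^ t + Δ) % m ^ t ∧
          ¬ m ^ (j+1) ∣ ((p / m ^ t + 1) * m ^ t + Δ) % m ^ t := by
        intro t ht1 ht2
        have hMt : 0 < m ^ t := Nat.pow_pos hm0
        set At := p / m ^ t + 1 with hAtdef
        have hpa1 : p < At * m ^ t := by
          have h1 := Nat.div_add_mod p (m ^ t)
          have h2 : p % m ^ t < m ^ t := Nat.mod_lt _ hMt
          calc p = m ^ t * (p / m ^ t) + p % m ^ t := h1.symm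
            _ < m ^ t * (p / m ^ t) + m ^ t := by omega
            _ = (p / m ^ t + 1) * m ^ t := by ring
            _ = At * m ^ t := by rw [hAtdef]
        have hpa2 : At * m ^ t ≤ p + m ^ t := by
          have h1 : p / m ^ t * m ^ t ≤ p := Nat.div_mul_le_self _ _
          calc At * m ^ t = p / m ^ t * m ^ t + m ^ t := by rw [hAtdef]; ring
            _ ≤ p + m ^ t := by omega
        clear_value At
        clear hAtdef
        set bt := At * m ^ t + Δ with hbtdef
        set Ct := bt / m ^ t with hCtdef
        set ψt := bt % m ^ t with hψtdef
        have hψlt : ψt < m ^ t := by rw [hψtdef]; exact Nat.mod_lt _ hMt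
        have hsplit : Ct * m ^ t + ψt = bt := by
          rw [hCtdef, hψtdef, Nat.mul_comm (bt / m ^ t) (m ^ t)]
          exact Nat.div_add_mod bt (m ^ t)
        clear_value Ct ψt
        clear hCtdef hψtdef
        have hDt : (ν + 1) * m ^ t + m ^ t ≤ D := by
          have h1 : m ^ t ≤ m ^ (j + 1 + Pc) := Nat.pow_le_pow_right (by omega) ht2
          have h2 : (ν + 2) * m ^ Pc * m ^ (j+1) = (ν + 2) * m ^ (j + 1 + Pc) := by
            rw [pow_add]; ring
          have h3 : (ν + 2) * m ^ (j + 1 + Pc) ≤ D := by rw [← h2]; exact hB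
          have h4 : (ν + 2) * m ^ t ≤ (ν + 2) * m ^ (j + 1 + Pc) := Nat.mul_le_mul_left _ h1
          have h5 : (ν + 2) * m ^ t = (ν + 1) * m ^ t + m ^ t := by ring
          omega
        have hνt : (ν + 1) * m ^ t = ν * m ^ t + m ^ t := by ring
        have h1 : subword x (At * m ^ t) (ν * m ^ t) =
            subword x (At * m ^ t + Δ) (ν * m ^ t) := by
          apply subword_congr
          intro w hw'
          have e1 : At * m ^ t + w = p + (At * m ^ t - p + w) := by omega
          have e2 : At * m ^ t + Δ + w = p + Δ + (At * m ^ t - p + w) := by omega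
          rw [e1, e2]
          exact hw _ (by omega)
        have h2 : subword x (At * m ^ t) (ν * m ^ t) =
            (subword x At ν).flatMap (substIter σ t) := aligned hm0 hunif hfix t At ν
        have h3 : subword x (Ct * m ^ t) ((ν + 1) * m ^ t) =
            (subword x Ct (ν + 1)).flatMap (substIter σ t) := aligned hm0 hunif hfix t Ct (ν + 1)
        have h4 : At * m ^ t + Δ = Ct * m ^ t + ψt := by omega
        have h5 : subword x (Ct * m ^ t + ψt) (ν * m ^ t) =
            ((subword x (Ct * m ^ t) ((ν + 1) * m ^ t)).drop ψt).take (ν * m ^ t) := by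
          rw [subword_drop_take x (by omega)]
        have hE : (subword x At ν).flatMap (substIter σ t) =
            (((subword x Ct (ν + 1)).flatMap (substIter σ t)).drop ψt).take (ν * m ^ t) := by
          rw [← h2, h1, h4, h5, h3]
        refine ⟨hE, ?_, ?_⟩
        · have hjt : m ^ j ∣ m ^ t := pow_dvd_pow m (by omega)
          have hd1 : m ^ j ∣ bt := by
            rw [hbtdef]
            exact Nat.dvd_add (Dvd.dvd.mul_left hjt At) hij
          have h7 : ψt = bt - Ct * m ^ t := by omega
          rw [h7]
          exact Nat.dvd_sub hd1 (Dvd.dvd.mul_left hjt Ct)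
        · intro hcon
          apply hnd
          have hjt : m ^ (j+1) ∣ m ^ t := pow_dvd_pow m (by omega)
          have hd1 : m ^ (j+1) ∣ bt := by
            have h7 : bt = Ct * m ^ t + ψt := by omega
            rw [h7]
            exact Nat.dvd_add (Dvd.dvd.mul_left hjt Ct) hcon
          have h8 : Δ = bt - At * m ^ t := by omega
          rw [h8]
          exact Nat.dvd_sub hd1 (Dvd.dvd.mul_left hjt At)
      -- pigeonhole over scales
      set enc : ℕ → (Fin ν → A) × (Fin (ν + 1) → A) := fun t =>
        (fun w => x (p / m ^ t + 1 + (w : ℕ)),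
         fun w => x (((p / m ^ t + 1) * m ^ t + Δ) / m ^ t + (w : ℕ))) with hencdef
      have hcard : (Finset.univ : Finset ((Fin ν → A) × (Fin (ν + 1) → A))).card <
          (Finset.Icc (j+1) (j+1+Pc)).card := by
        rw [Nat.card_Icc, Finset.card_univ, ← hPc]
        omega
      obtain ⟨t1, ht1mem, t2, ht2mem, htne, hencEq⟩ :=
        Finset.exists_ne_map_eq_of_card_lt_of_maps_to hcard
          (fun a _ => Finset.mem_univ (enc a))
      have final : ∀ t t', t ∈ Finset.Icc (j+1) (j+1+Pc) → t' ∈ Finset.Icc (j+1) (j+1+Pc) →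
          t < t' → enc t = enc t' → False := by
        intro t t' hmem hmem' hlt hEq
        rw [Finset.mem_Icc] at hmem hmem'
        obtain ⟨hEt, hdvdt, hndvdt⟩ := key t hmem.1 hmem.2
        obtain ⟨hEt', hdvdt', hndvdt'⟩ := key t' hmem'.1 hmem'.2
        obtain ⟨r, hr1, hrEq⟩ : ∃ r, 1 ≤ r ∧ t' = t + r := ⟨t' - t, by omega, by omega⟩
        have hveq : subword x (p / m ^ t + 1) ν = subword x (p / m ^ t' + 1) ν := by
          apply subword_congr
          intro w hw'
          exact congrFun (congrArg Prod.fst hEq) ⟨w, hw'⟩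
        have hueq : subword x (((p / m ^ t + 1) * m ^ t + Δ) / m ^ t) (ν + 1) =
            subword x (((p / m ^ t' + 1) * m ^ t' + Δ) / m ^ t') (ν + 1) := by
          apply subword_congr
          intro w hw'
          exact congrFun (congrArg Prod.snd hEq) ⟨w, hw'⟩
        rw [hveq, hueq] at hEt
        set Ct' := ((p / m ^ t' + 1) * m ^ t' + Δ) / m ^ t' with hCt'def
        set ψt := ((p / m ^ t + 1) * m ^ t + Δ) % m ^ t with hψtdef
        set ψt' := ((p / m ^ t' + 1) * m ^ t' + Δ) % m ^ t' with hψt'def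
        have hψtlt : ψt < m ^ t := by rw [hψtdef]; exact Nat.mod_lt _ (Nat.pow_pos hm0)
        have hψt'lt : ψt' < m ^ t' := by
          rw [hψt'def]; exact Nat.mod_lt _ (Nat.pow_pos hm0)
        clear_value Ct' ψt ψt'
        clear hCt'def hψtdef hψt'def
        set V := subword x (p / m ^ t' + 1) ν with hVdef
        set U := subword x Ct' (ν + 1) with hUdef
        -- apply sigma^r to the scale-t relation
        have hlen_r : ∀ a : A, (substIter σ r a).length = m ^ r := substIter_length hunif r
        have hBrel : V.flatMap (substIter σ t') =
            ((U.flatMap (substIter σ t')).drop (ψt * m ^ r)).take (ν * m ^ t') := by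
          have h0 := congrArg (fun l => l.flatMap (substIter σ r)) hEt
          rw [take_flatMap_uniform _ _ hlen_r, drop_flatMap_uniform _ _ hlen_r,
            List.flatMap_assoc, List.flatMap_assoc] at h0
          have hfold : ∀ l : List A,
              (l.flatMap fun a => (substIter σ t a).flatMap (substIter σ r)) =
              l.flatMap (substIter σ t') := by
            intro l
            congr 1
            funext a
            rw [← substIter_add, ← hrEq]
          rw [hfold V, hfold U] at h0
          have hmul : ν * m ^ t * m ^ r = ν * m ^ t' := by
            rw [hrEq, pow_add]; ring
          rw [hmul] at h0
          exact h0
        have hArel : V.flatMap (substIter σ t') =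
            ((U.flatMap (substIter σ t')).drop ψt').take (ν * m ^ t') := hEt'
        have hU2 : U.flatMap (substIter σ t') =
            subword x (Ct' * m ^ t') ((ν + 1) * m ^ t') :=
          (aligned hm0 hunif hfix t' Ct' (ν + 1)).symm
        have ho1lt : ψt * m ^ r < m ^ t' := by
          rw [hrEq, pow_add]
          exact (Nat.mul_lt_mul_right (Nat.pow_pos hm0)).mpr hψtlt
        have hνt' : (ν + 1) * m ^ t' = ν * m ^ t' + m ^ t' := by ring
        have hsub1 : subword x (Ct' * m ^ t' + ψt * m ^ r) (ν * m ^ t') =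
            subword x (Ct' * m ^ t' + ψt') (ν * m ^ t') := by
          rw [← subword_drop_take x (s := Ct' * m ^ t') (o := ψt * m ^ r)
              (ℓ := ν * m ^ t') (L := (ν + 1) * m ^ t') (by omega),
            ← subword_drop_take x (s := Ct' * m ^ t') (o := ψt')
              (ℓ := ν * m ^ t') (L := (ν + 1) * m ^ t') (by omega),
            ← hU2, ← hBrel, ← hArel]
        have hdvd1 : m ^ (j+1) ∣ ψt * m ^ r := by
          rw [pow_succ]
          exact mul_dvd_mul hdvdt (dvd_pow_self m (by omega))
        have hone : ψt * m ^ r ≠ ψt' := by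
          intro hcc
          rw [hcc] at hdvd1
          exact hndvdt' hdvd1
        have hpt := subword_eq_pointwise hsub1
        rcases Nat.lt_or_ge (ψt * m ^ r) ψt' with hc | hc
        · have hρ1 : 1 ≤ ψt' - ψt * m ^ r := by omega
          apply hNP (ψt' - ψt * m ^ r) (Ct' * m ^ t' + ψt * m ^ r) (ν * m ^ t') hρ1 ?_ ?_
          · have hν2 : ν * m ^ t' = 2 * (K * m ^ t') + m ^ t' := by rw [hν]; ring
            have hb1 : K * (ψt' - ψt * m ^ r + 1) ≤ K * m ^ t' :=
              Nat.mul_le_mul_left _ (by omega)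
            omega
          · intro w hwlt
            have h := hpt w hwlt
            have e : Ct' * m ^ t' + ψt' + w =
                Ct' * m ^ t' + ψt * m ^ r + (ψt' - ψt * m ^ r) + w := by omega
            rw [e] at h
            exact h
        · have hc2 : ψt' < ψt * m ^ r := by omega
          have hρ1 : 1 ≤ ψt * m ^ r - ψt' := by omega
          apply hNP (ψt * m ^ r - ψt') (Ct' * m ^ t' + ψt') (ν * m ^ t') hρ1 ?_ ?_
          · have hν2 : ν * m ^ t' = 2 * (K * m ^ t') + m ^ t' := by rw [hν]; ring
            have hb1 : K * (ψt * m ^ r - ψt' + 1) ≤ K * m ^ t' :=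
              Nat.mul_le_mul_left _ (by omega)
            omega
          · intro w hwlt
            have h := (hpt w hwlt).symm
            have e : Ct' * m ^ t' + ψt * m ^ r + w =
                Ct' * m ^ t' + ψt' + (ψt * m ^ r - ψt') + w := by omega
            rw [e] at h
            exact h
      rcases lt_or_gt_of_ne htne with hlt | hlt
      · exact final t1 t2 ht1mem ht2mem hlt hencEq
      · exact final t2 t1 ht2mem ht1mem hlt hencEq.symm

lemma closure_window {A' : Type*} [TopologicalSpace A'] [DiscreteTopology A'] {x y : ℕ → A'}
    (hy : y ∈ closure {y' : ℕ → A' | ∃ n : ℕ, y' = fun k => x (k + n)}) (L : ℕ) :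
    ∃ r, ∀ w, w < L → y w = x (w + r) := by
  have hU : IsOpen {z : ℕ → A' | ∀ w, w < L → z w = y w} := by
    have he : {z : ℕ → A' | ∀ w, w < L → z w = y w} =
        ⋂ (w : Fin L), (fun z : ℕ → A' => z (w : ℕ)) ⁻¹' {y (w : ℕ)} := by
      ext z
      simp only [Set.mem_iInter, Set.mem_preimage, Set.mem_singleton_iff, Set.mem_setOf_eq]
      constructor
      · intro h w; exact h w w.2
      · intro h w hw; exact h ⟨w, hw⟩
    rw [he]
    exact isOpen_iInter_of_finite fun w =>
      (continuous_apply ((w : ℕ))).isOpen_preimage _ (isOpen_discrete _)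
  have hne := mem_closure_iff.mp hy _ hU (fun w _ => rfl)
  obtain ⟨z, hz1, nn, hz2⟩ := hne
  refine ⟨nn, fun w hw => ?_⟩
  have h1 := hz1 w hw
  rw [hz2] at h1
  exact h1.symm

end APf

/-- Theorem 2 / main theorem: if `σ` is a primitive `m`-uniform substitution
(`m ≥ 2`) on a finite alphabet with an aperiodic fixed point `x`, then there is a constant `C`
such that every `y` in the shift orbit closure `X(σ)` contains, for all `n` and `k ≥ 1`,
a `k`-anti-power with block length at most `C * k` starting at position `n`. -/
theorem antipowers_of_primitive_uniform
    {A : Type*} [Fintype A] [Inhabited A] [TopologicalSpace A] [DiscreteTopology A]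
    (σ : A → List A) (m : ℕ) (hm : 2 ≤ m)
    (hunif : IsUniform σ m) (hprim : IsPrimitive σ)
    (x : ℕ → A) (hfix : substInf σ m x = x) (haper : IsAperiodic x) :
    ∃ C : ℕ, ∀ y ∈ shiftOrbitClosure x, ∀ n k : ℕ, 1 ≤ k →
      ∃ d : ℕ, 1 ≤ d ∧ d ≤ C * k ∧ HasAntipower y n k d := by
  classical
  have hm0 : 0 < m := by omega
  obtain ⟨B, hB1, hphase⟩ := APf.window_phase hm hunif hprim hfix haper
  refine ⟨B * m * m + 1, ?_⟩
  intro y hy n k hk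
  obtain ⟨T, hT1, hT2⟩ := APf.exists_pow_between hm k hk
  refine ⟨m * (B * m ^ T) + 1, by omega, ?_, ?_⟩
  · have h1 : m * (B * m ^ T) ≤ m * (B * (m * k)) := by
      apply Nat.mul_le_mul_left
      exact Nat.mul_le_mul_left _ hT2
    have h2 : m * (B * (m * k)) = B * m * m * k := by ring
    have h3 : (B * m * m + 1) * k = B * m * m * k + k := by ring
    omega
  · set d := m * (B * m ^ T) + 1 with hddef
    intro i hi j hj hij
    suffices hmain : ∀ i j, i < j → j < k →
        subword y (n + i * d) d ≠ subword y (n + j * d) d by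
      rcases Nat.lt_or_ge i j with h | h
      · exact hmain i j h hj
      · have h' : j < i := by omega
        exact fun hcc => hmain j i h' hi hcc.symm
    clear hi hj hij
    intro i j hij' hjk heq
    obtain ⟨rr, hrr⟩ := APf.closure_window hy (n + k * d)
    have hwin : ∀ a, a < k → subword y (n + a * d) d = subword x (n + a * d + rr) d := by
      intro a ha
      apply APf.subword_congr
      intro w hw
      have hbound : n + a * d + w < n + k * d := by
        have h4 : (a + 1) * d ≤ k * d := Nat.mul_le_mul_right _ (by omega)
        have h5 : (a + 1) * d = a * d + d := by ring
        omega
      have h3 := hrr (n + a * d + w) hbound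
      rw [h3]
      congr 1
      omega
    have hxeq : subword x (n + i * d + rr) d = subword x (n + j * d + rr) d := by
      rw [← hwin i (by omega), ← hwin j hjk]
      exact heq
    have hΔeq : (j - i) * d + i * d = j * d := by
      have h4 : j - i + i = j := by omega
      calc (j - i) * d + i * d = (j - i + i) * d := by ring
        _ = j * d := by rw [h4]
    have hpoint : ∀ w, w < d →
        x ((n + i * d + rr) + w) = x ((n + i * d + rr) + (j - i) * d + w) := by
      intro w hw
      have h5 := APf.subword_eq_pointwise hxeq w hw
      have e : n + j * d + rr + w = (n + i * d + rr) + (j - i) * d + w := by omega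
      rw [e] at h5
      exact h5
    have hBd : B * m ^ T ≤ d := by
      have h6 : B * m ^ T ≤ m * (B * m ^ T) := by
        calc B * m ^ T = 1 * (B * m ^ T) := by ring
          _ ≤ m * (B * m ^ T) := Nat.mul_le_mul_right _ (by omega)
      omega
    have hdvd : m ^ T ∣ (j - i) * d := hphase T ((j - i) * d) (n + i * d + rr) d hpoint hBd
    have hco : Nat.Coprime m d := by
      have h6 : d % m = 1 := by
        rw [hddef, Nat.mul_add_mod]
        exact Nat.mod_eq_of_lt (by omega)
      unfold Nat.Coprime
      rw [Nat.gcd_rec, h6]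
      exact Nat.gcd_one_left m
    have hcoT : Nat.Coprime (m ^ T) d := Nat.Coprime.pow_left T hco
    have hdvd2 : m ^ T ∣ (j - i) := hcoT.dvd_of_dvd_mul_right hdvd
    have hle : m ^ T ≤ j - i := Nat.le_of_dvd (by omega) hdvd2
    omega
end

section
/- Let w be an aperiodic infinite word over a two-letter alphabet that is a fixed point of a primitive m-uniform morphism (m ≥ 2). Then there is a constant C = C(w) such that for all n ∈ ℕ and k ≥ 1, w contains a k-anti-power with block length at most C·k beginning at its n-th position. -/
namespace APaux

variable {σ : Fin 2 → List (Fin 2)} {m : ℕ}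

theorem substWord_len (hunif : IsUniform σ m) (u : List (Fin 2)) :
    (substWord σ u).length = m * u.length := by
  unfold substWord
  rw [List.length_flatMap]
  induction u with
  | nil => simp
  | cons a u ih => simp only [List.map_cons, List.sum_cons, ih, Function.comp, hunif a,
      List.length_cons]; ring

theorem iter_len (hunif : IsUniform σ m) (t : ℕ) (a : Fin 2) :
    (substIter σ t a).length = m ^ t := by
  induction t with
  | zero => simp [substIter]
  | succ t ih =>
      have : substIter σ (t+1) a = substWord σ (substIter σ t a) := by
        simp [substIter, Function.iterate_succ_apply']
      rw [this, substWord_len hunif, ih, pow_succ, Nat.mul_comm]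

theorem flatMap_iter (t : ℕ) (u : List (Fin 2)) :
    (substWord σ)^[t] u = u.flatMap (substIter σ t) := by
  induction t generalizing u with
  | zero =>
      simp only [substIter, Function.iterate_zero, id]
      exact (List.flatMap_singleton' u).symm
  | succ t ih =>
      rw [Function.iterate_succ_apply, ih]
      show (substWord σ u).flatMap (substIter σ t) = _
      unfold substWord
      rw [List.flatMap_assoc]
      congr 1
      funext a
      show (σ a).flatMap (substIter σ t) = (substWord σ)^[t+1] [a]
      rw [Function.iterate_succ_apply]
      show _ = (substWord σ)^[t] (substWord σ [a])
      rw [ih]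
      congr 1
      simp [substWord]

theorem iter_succ (t : ℕ) (a : Fin 2) :
    substIter σ (t+1) a = (σ a).flatMap (substIter σ t) := by
  show (substWord σ)^[t+1] [a] = _
  rw [Function.iterate_succ_apply, flatMap_iter]
  congr 1
  simp [substWord]

theorem getD_flatMap {f : Fin 2 → List (Fin 2)} {k : ℕ} (hf : ∀ a, (f a).length = k)
    (u : List (Fin 2)) (i r : ℕ) (hi : i < u.length) (hr : r < k) :
    (u.flatMap f).getD (k * i + r) default = (f (u.getD i default)).getD r default := by
  induction u generalizing i with
  | nil => simp at hi
  | cons a u ih =>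
      cases i with
      | zero =>
          simp only [List.flatMap_cons, Nat.mul_zero, Nat.zero_add]
          rw [List.getD_append]
          · simp
          · rw [hf a]; exact hr
      | succ i =>
          simp only [List.flatMap_cons]
          have hlen : k * (i+1) + r = (f a).length + (k * i + r) := by
            rw [hf a]; ring
          rw [hlen, List.getD_append_right _ _ _ _ (Nat.le_add_right _ _)]
          simp only [Nat.add_sub_cancel_left]
          have := ih i (by simpa using hi)
          simpa using this

end APaux


namespace APaux2
open APaux

variable {σ : Fin 2 → List (Fin 2)} {m : ℕ} {w : ℕ → Fin 2}

theorem point1 (hm : 2 ≤ m) (hfix : substInf σ m w = w) (q j : ℕ) (hj : j < m) :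
    w (m * q + j) = (σ (w q)).getD j default := by
  have h := congrFun hfix (m * q + j)
  rw [← h]
  show (σ (w ((m*q+j)/m))).getD ((m*q+j)%m) default = _
  have h1 : (m*q+j)/m = q := by
    rw [Nat.mul_add_div (by omega)]
    simp [Nat.div_eq_of_lt hj]
  have h2 : (m*q+j)%m = j := by
    rw [Nat.mul_add_mod, Nat.mod_eq_of_lt hj]
  rw [h1, h2]

theorem point (hm : 2 ≤ m) (hunif : IsUniform σ m) (hfix : substInf σ m w = w)
    (t : ℕ) : ∀ q s, s < m ^ t → w (m ^ t * q + s) = (substIter σ t (w q)).getD s default := by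
  induction t with
  | zero =>
      intro q s hs
      have hs0 : s = 0 := by simpa using hs
      subst hs0
      simp [substIter]
  | succ t ih =>
      intro q s hs
      have hmt : 0 < m ^ t := pow_pos (by omega) t
      set s₁ := s / m ^ t with hs₁
      set s₀ := s % m ^ t with hs₀
      have hs₀lt : s₀ < m ^ t := Nat.mod_lt _ hmt
      have hs₁lt : s₁ < m := by
        have : s < m ^ t * m := by rw [← pow_succ]; exact hs
        exact Nat.div_lt_of_lt_mul (by omega)
      have hsplit : s = m ^ t * s₁ + s₀ := by
        rw [hs₁, hs₀]; exact (Nat.div_add_mod s (m^t)).symm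
      have hpos : m ^ (t+1) * q + s = m ^ t * (m * q + s₁) + s₀ := by
        rw [hsplit, pow_succ]; ring
      rw [hpos, ih (m*q+s₁) s₀ hs₀lt, point1 hm hfix q s₁ hs₁lt]
      rw [iter_succ]
      rw [hsplit]
      exact (getD_flatMap (iter_len hunif t) _ s₁ s₀ (by rw [hunif]; exact hs₁lt) hs₀lt).symm

theorem sigma01 (hm : 2 ≤ m) (hfix : substInf σ m w = w) (haper : IsAperiodic w) :
    σ 0 ≠ σ 1 := by
  intro h
  apply haper
  have hall : ∀ a : Fin 2, σ a = σ 0 := by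
    intro a; fin_cases a
    · rfl
    · exact h.symm
  refine ⟨m, by omega, 0, fun n _ => ?_⟩
  have h1 := congrFun hfix (n + m)
  have h2 := congrFun hfix n
  rw [← h1, ← h2]
  show (σ (w ((n+m)/m))).getD ((n+m)%m) default = (σ (w (n/m))).getD (n%m) default
  rw [hall (w ((n+m)/m)), hall (w (n/m)), Nat.add_mod_right]

theorem sigma_inj (hm : 2 ≤ m) (hfix : substInf σ m w = w) (haper : IsAperiodic w) :
    ∀ a b : Fin 2, σ a = σ b → a = b := by
  intro a b hab
  by_contra hne
  have hcases' : ∀ x y : Fin 2, x ≠ y → (x = 0 ∧ y = 1) ∨ (x = 1 ∧ y = 0) := by decide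
  have hcases := hcases' a b hne
  have h01 := sigma01 hm hfix haper
  rcases hcases with ⟨ha, hb⟩ | ⟨ha, hb⟩
  · exact h01 (ha ▸ hb ▸ hab)
  · exact h01 (ha ▸ hb ▸ hab).symm

theorem letter_occ (hm : 2 ≤ m) (hunif : IsUniform σ m) (hfix : substInf σ m w = w)
    {n₀ : ℕ} (hn : ∀ a b, b ∈ substIter σ n₀ a) (b : Fin 2) (M : ℕ) :
    ∃ p, M ≤ p ∧ w p = b := by
  have hmt : 0 < m ^ n₀ := pow_pos (by omega) n₀
  set g := M / m ^ n₀ + 1 with hg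
  obtain ⟨i, hilen, hi⟩ := List.mem_iff_getElem.mp (hn (w g) b)
  rw [iter_len hunif] at hilen
  refine ⟨m ^ n₀ * g + i, ?_, ?_⟩
  · have := Nat.div_add_mod M (m ^ n₀)
    have := Nat.mod_lt M hmt
    nlinarith [Nat.mul_le_mul_left (m ^ n₀) (le_refl (M / m ^ n₀))]
  · rw [point hm hunif hfix n₀ g i hilen]
    rw [List.getD_eq_getElem _ _ (by rw [iter_len hunif]; exact hilen)]
    exact hi

end APaux2

namespace APaux3
open APaux APaux2

variable {σ : Fin 2 → List (Fin 2)} {m : ℕ} {w : ℕ → Fin 2}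

theorem pair_rec (hm : 2 ≤ m) (hunif : IsUniform σ m) (hfix : substInf σ m w = w)
    {n₀ : ℕ} (hn : ∀ a b, b ∈ substIter σ n₀ a) :
    ∃ R, 1 ≤ R ∧ ∀ p M, ∃ z, M ≤ z ∧ z + 1 < M + R ∧ w z = w p ∧ w (z+1) = w (p+1) := by
  classical
  -- bounded representatives for pairs
  obtain ⟨N, hN⟩ : ∃ N, ∀ p : ℕ, ∃ p', p' ≤ N ∧ w p' = w p ∧ w (p'+1) = w (p+1) := by
    set F : Fin 2 × Fin 2 → ℕ :=
      fun v => if h : ∃ q, w q = v.1 ∧ w (q+1) = v.2 then h.choose else 0 with hF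
    refine ⟨Finset.univ.sup F, fun p => ?_⟩
    have h : ∃ q, w q = (w p, w (p+1)).1 ∧ w (q+1) = (w p, w (p+1)).2 := ⟨p, rfl, rfl⟩
    refine ⟨h.choose, ?_, h.choose_spec.1, h.choose_spec.2⟩
    have hFv : F (w p, w (p+1)) = h.choose := by
      rw [hF]; exact dif_pos h
    have := Finset.le_sup (f := F) (Finset.mem_univ (w p, w (p+1)))
    omega
  set T := N + 2 with hT
  have hTpow : N + 2 < m ^ T := by
    calc N + 2 < 2 ^ (N+2) := Nat.lt_two_pow_self (n := N+2)
    _ ≤ m ^ T := Nat.pow_le_pow_left (by omega) _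
  set P := m ^ (T + n₀) with hP
  have hPval : m ^ T * m ^ n₀ = P := (pow_add m T n₀).symm
  have hmT : 0 < m ^ T := pow_pos (by omega) _
  have hPpos : 0 < P := by rw [hP]; exact pow_pos (by omega) _
  refine ⟨2 * P + N + 2, by omega, fun p M => ?_⟩
  obtain ⟨p', hp'N, hp'1, hp'2⟩ := hN p
  set g := M / P + 1 with hg
  obtain ⟨i, hilen, hi⟩ := List.mem_iff_getElem.mp (hn (w g) (w 0))
  rw [iter_len hunif] at hilen
  have key : ∀ s, s < m ^ T → w (P * g + m ^ T * i + s) = w s := by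
    intro s hs
    have h1 : P * g + m ^ T * i + s = m ^ T * (m ^ n₀ * g + i) + s := by
      rw [← hPval]; ring
    have h2 : w (m ^ n₀ * g + i) = w 0 := by
      rw [point hm hunif hfix n₀ g i hilen]
      rw [List.getD_eq_getElem _ _ (by rw [iter_len hunif]; exact hilen)]
      exact hi
    have h3 : w s = w (m ^ T * 0 + s) := by norm_num
    rw [h1, point hm hunif hfix T _ s hs, h2, h3, point hm hunif hfix T 0 s hs]
  have hz1 : w (P * g + m ^ T * i + p') = w p := by
    rw [key p' (by omega), hp'1]
  have hz2 : w (P * g + m ^ T * i + p' + 1) = w (p+1) := by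
    have : P * g + m ^ T * i + p' + 1 = P * g + m ^ T * i + (p' + 1) := by ring
    rw [this, key (p'+1) (by omega), hp'2]
  refine ⟨P * g + m ^ T * i + p', ?_, ?_, hz1, hz2⟩
  · have h4 := Nat.div_add_mod M P
    have h5 := Nat.mod_lt M hPpos
    have h6 : P * g = P * (M / P) + P := by rw [hg]; ring
    omega
  · have h4 := Nat.div_add_mod M P
    have h5 := Nat.mod_lt M hPpos
    have h6 : P * g = P * (M / P) + P := by rw [hg]; ring
    have h7 : m ^ T * (i + 1) ≤ m ^ T * m ^ n₀ := Nat.mul_le_mul_left _ (by omega)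
    rw [hPval] at h7
    have h8 : m ^ T * (i+1) = m ^ T * i + m ^ T := by ring
    omega

end APaux3

namespace APaux4
open APaux APaux2 APaux3

variable {σ : Fin 2 → List (Fin 2)} {m : ℕ} {w : ℕ → Fin 2}

theorem periodic_of_forward (f : Fin 2 → Fin 2) (hf : ∀ p, w (p+1) = f (w p)) :
    EventuallyPeriodic w := by
  have hf3 : ∀ g : Fin 2 → Fin 2, ∀ a, g (g (g a)) = g a := by decide
  refine ⟨2, by omega, 1, fun n hn => ?_⟩
  obtain ⟨p, rfl⟩ : ∃ p, n = p + 1 := ⟨n - 1, by omega⟩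
  have h1 : w (p+1+2) = f (f (f (w p))) := by
    rw [show p+1+2 = (p+2)+1 from rfl, hf, show p+2 = (p+1)+1 from rfl, hf, hf]
  rw [h1, hf3 f (w p)]
  exact (hf p).symm

theorem list_ext_E (hunif : IsUniform σ m) (a b : Fin 2)
    (h : ∀ j, j < m → (σ a).getD j default = (σ b).getD j default) : σ a = σ b := by
  apply List.ext_getElem
  · rw [hunif a, hunif b]
  · intro i h1 h2
    have hi : i < m := by rw [← hunif a]; exact h1
    have := h i hi
    rwa [List.getD_eq_getElem _ _ h1, List.getD_eq_getElem _ _ h2] at this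

theorem recog (hm : 2 ≤ m) (hunif : IsUniform σ m) (hfix : substInf σ m w = w)
    (haper : IsAperiodic w) {n₀ : ℕ} (hn : ∀ a b, b ∈ substIter σ n₀ a) :
    ∃ L, 1 ≤ L ∧ ∀ x δ ℓ, 1 ≤ δ → L ≤ ℓ →
      (∀ i, i < ℓ → w (x + i) = w (x + δ + i)) → δ % m = 0 := by
  classical
  obtain ⟨R, hR1, hpair⟩ := pair_rec hm hunif hfix hn
  refine ⟨m * (R + 3), Nat.mul_pos (by omega) (by omega), fun x δ ℓ hδ hL hagree => ?_⟩
  by_contra hc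
  set E : Fin 2 → ℕ → Fin 2 := fun a i => (σ a).getD i default with hE
  obtain ⟨δ', c, hδsplit, hclt, hcpos⟩ : ∃ δ' c, δ = m * δ' + c ∧ c < m ∧ 0 < c :=
    ⟨δ / m, δ % m, (Nat.div_add_mod δ m).symm, Nat.mod_lt _ (by omega),
      Nat.pos_of_ne_zero hc⟩
  -- decide helpers
  have hne2 : ∀ a b : Fin 2, a ≠ b → (a = 0 ∧ b = 1) ∨ (a = 1 ∧ b = 0) := by decide
  have hnot0 : ∀ a : Fin 2, a ≠ 0 → a = 1 := by decide
  have hgg : ∀ g : Fin 2 → Fin 2, g 0 ≠ g 1 → ∀ a, g (g a) = a := by decide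
  -- the overlap condition
  have hcond : ∀ p, ∃ e : Fin 2,
      (∀ j, j + c < m → E e j = E (w p) (j + c)) ∧
      (∀ j, m ≤ j + c → j < m → E e j = E (w (p+1)) (j + c - m)) := by
    intro p
    obtain ⟨z, hz1, hz2, hz3, hz4⟩ := hpair p (x / m + 1 + δ')
    obtain ⟨q, rfl⟩ : ∃ q, z = q + δ' :=
      ⟨z - δ', (Nat.sub_add_cancel (le_trans (Nat.le_add_left δ' (x/m+1)) hz1)).symm⟩
    have hxdiv := Nat.div_add_mod x m
    have hxmod : x % m < m := Nat.mod_lt _ (by omega)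
    have hmul1 : m * (x / m + 1) = m * (x / m) + m := by ring
    have hq1 : x / m + 1 ≤ q := by omega
    have hmul2 : m * (x / m + 1) ≤ m * q := Nat.mul_le_mul_left _ hq1
    have hxq : x ≤ m * q := by omega
    have hmul5 : m * (q + δ') = m * q + m * δ' := by ring
    have hkey : ∀ j, j < m → w (m * q + j) = w (m * (q + δ') + (j + c)) := by
      intro j hj
      have hq2 : q ≤ x / m + R := by omega
      have hmul3 : m * q ≤ m * (x / m + R) := Nat.mul_le_mul_left _ hq2
      have hmul4 : m * (x / m + R) = m * (x / m) + m * R := by ring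
      have h4 : m * (R + 3) = m * R + 3 * m := by ring
      have hup : m * q + j < x + ℓ := by omega
      have h5 := hagree (m * q + j - x) (by omega)
      have heq1 : x + (m * q + j - x) = m * q + j := by omega
      have heq2 : x + δ + (m * q + j - x) = m * (q + δ') + (j + c) := by omega
      rw [heq1, heq2] at h5
      exact h5
    refine ⟨w q, fun j hj => ?_, fun j hj1 hj2 => ?_⟩
    · have h1 : E (w q) j = w (m * q + j) := (point1 hm hfix q j (by omega)).symm
      have h2 : w (m * (q + δ') + (j + c)) = E (w (q + δ')) (j + c) :=
        point1 hm hfix (q + δ') (j + c) hj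
      rw [h1, hkey j (by omega), h2, hz3]
    · have h1 : E (w q) j = w (m * q + j) := (point1 hm hfix q j hj2).symm
      have hmul6 : m * (q + δ' + 1) = m * (q + δ') + m := by ring
      have hsplit2 : m * (q + δ') + (j + c) = m * (q + δ' + 1) + (j + c - m) := by omega
      have h2 : w (m * (q + δ' + 1) + (j + c - m)) = E (w (q + δ' + 1)) (j + c - m) :=
        point1 hm hfix (q + δ' + 1) (j + c - m) (by omega)
      rw [h1, hkey j hj2, hsplit2, h2, hz4]
  -- σ 0 and σ 1 differ somewhere
  have hσ01 : σ 0 ≠ σ 1 := sigma01 hm hfix haper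
  have hdiff : ∃ j, j < m ∧ E 0 j ≠ E 1 j := by
    by_contra hd
    push_neg at hd
    exact hσ01 (list_ext_E hunif 0 1 (fun j hj => hd j hj))
  obtain ⟨j₀, hj₀m, hj₀⟩ := hdiff
  -- final contradiction will be: ∀ j < m, E 0 j = E 1 j
  suffices hall : ∀ j, j < m → E 0 j = E 1 j by
    exact hσ01 (list_ext_E hunif 0 1 hall)
  by_cases hAB : j₀ + c < m
  · -- Case A : prefix part distinguishes; e determined by w p
    have hdet : ∀ p p' (e e' : Fin 2), w p = w p' →
        (∀ j, j + c < m → E e j = E (w p) (j + c)) →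
        (∀ j, j + c < m → E e' j = E (w p') (j + c)) → e = e' := by
      intro p p' e e' hw h h'
      by_contra hee
      apply hj₀
      have h1 := h j₀ hAB
      have h2 := h' j₀ hAB
      rw [hw] at h1
      have h3 : E e j₀ = E e' j₀ := h1.trans h2.symm
      rcases hne2 e e' hee with ⟨he, he'⟩ | ⟨he, he'⟩
      · rw [he, he'] at h3; exact h3
      · rw [he, he'] at h3; exact h3.symm
    by_cases hfor : ∀ p p', w p = w p' → w (p+1) = w (p'+1)
    · -- forward determinism : periodic
      obtain ⟨p0, _, hp0⟩ := letter_occ hm hunif hfix hn 0 0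
      obtain ⟨p1, _, hp1⟩ := letter_occ hm hunif hfix hn 1 0
      set f : Fin 2 → Fin 2 := fun a => if a = 0 then w (p0 + 1) else w (p1 + 1) with hfdef
      have hf0 : f 0 = w (p0 + 1) := by simp [hfdef]
      have hf1 : f 1 = w (p1 + 1) := by simp [hfdef]
      have hf : ∀ p, w (p+1) = f (w p) := by
        intro p
        by_cases h : w p = 0
        · rw [h, hf0]; exact hfor p p0 (h.trans hp0.symm)
        · have h1 := hnot0 _ h
          rw [h1, hf1]; exact hfor p p1 (h1.trans hp1.symm)
      exact absurd (periodic_of_forward f hf) haper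
    · push_neg at hfor
      obtain ⟨p, p', hwpp, hwss⟩ := hfor
      obtain ⟨e, he1, he2⟩ := hcond p
      obtain ⟨e', he1', he2'⟩ := hcond p'
      have hee : e = e' := hdet p p' e e' hwpp he1 he1'
      -- (T) : ∀ i < c, E 0 i = E 1 i
      have hT : ∀ i, i < c → E 0 i = E 1 i := by
        intro i hi
        have hj : m ≤ (i + m - c) + c ∧ (i + m - c) < m ∧ (i + m - c) + c - m = i := by omega
        have h1 := he2 (i + m - c) (by omega) hj.2.1
        have h2 := he2' (i + m - c) (by omega) hj.2.1
        rw [hee] at h1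
        have h3 := h1.symm.trans h2
        rw [hj.2.2] at h3
        rcases hne2 _ _ hwss with ⟨ha, hb⟩ | ⟨ha, hb⟩
        · rw [ha, hb] at h3; exact h3
        · rw [ha, hb] at h3; exact h3.symm
      -- period relations from representatives of each letter
      obtain ⟨p0, _, hp0⟩ := letter_occ hm hunif hfix hn 0 0
      obtain ⟨p1, _, hp1⟩ := letter_occ hm hunif hfix hn 1 0
      obtain ⟨e0, he01, _⟩ := hcond p0
      obtain ⟨e1, he11, _⟩ := hcond p1
      rw [hp0] at he01
      rw [hp1] at he11
      -- strong induction
      intro j hjm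
      induction j using Nat.strong_induction_on with
      | _ j IH =>
        by_cases hjc : j < c
        · exact hT j hjc
        · have hjj : (j - c) + c = j := by omega
          have hlt : j - c + c < m := by omega
          have h0 := he01 (j - c) hlt
          have h1 := he11 (j - c) hlt
          rw [hjj] at h0 h1
          have hIH : E 0 (j - c) = E 1 (j - c) := IH (j - c) (by omega) (by omega)
          have hee0 : ∀ e : Fin 2, E e (j - c) = E 0 (j - c) := by
            intro e; fin_cases e
            · rfl
            · exact hIH.symm
          rw [← h0, ← h1, hee0 e0, hee0 e1]
  · -- Case B : suffix part distinguishes; e determined by w (p+1)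
    have hBj : m ≤ j₀ + c := by omega
    have hdet : ∀ p p' (e e' : Fin 2), w (p+1) = w (p'+1) →
        (∀ j, m ≤ j + c → j < m → E e j = E (w (p+1)) (j + c - m)) →
        (∀ j, m ≤ j + c → j < m → E e' j = E (w (p'+1)) (j + c - m)) → e = e' := by
      intro p p' e e' hw h h'
      by_contra hee
      apply hj₀
      have h1 := h j₀ hBj hj₀m
      have h2 := h' j₀ hBj hj₀m
      rw [hw] at h1
      have h3 : E e j₀ = E e' j₀ := h1.trans h2.symm
      rcases hne2 e e' hee with ⟨he, he'⟩ | ⟨he, he'⟩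
      · rw [he, he'] at h3; exact h3
      · rw [he, he'] at h3; exact h3.symm
    by_cases hback : ∀ p p', w (p+1) = w (p'+1) → w p = w p'
    · -- backward determinism : periodic
      obtain ⟨q0', hq0ge, hq0⟩ := letter_occ hm hunif hfix hn 0 1
      obtain ⟨q1', hq1ge, hq1⟩ := letter_occ hm hunif hfix hn 1 1
      obtain ⟨q0, rfl⟩ : ∃ q, q0' = q + 1 := ⟨q0' - 1, by omega⟩
      obtain ⟨q1, rfl⟩ : ∃ q, q1' = q + 1 := ⟨q1' - 1, by omega⟩
      set g : Fin 2 → Fin 2 := fun b => if b = 0 then w q0 else w q1 with hgdef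
      have hg0 : g 0 = w q0 := by simp [hgdef]
      have hg1 : g 1 = w q1 := by simp [hgdef]
      have hg : ∀ p, w p = g (w (p+1)) := by
        intro p
        by_cases h : w (p+1) = 0
        · rw [h, hg0]; exact hback p q0 (h.trans hq0.symm)
        · have h1 := hnot0 _ h
          rw [h1, hg1]; exact hback p q1 (h1.trans hq1.symm)
      by_cases hgc : g 0 = g 1
      · have hgall : ∀ a : Fin 2, g a = g 0 := by
          intro a; fin_cases a
          · rfl
          · exact hgc.symm
        apply absurd _ haper
        refine ⟨1, le_refl _, 0, fun n _ => ?_⟩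
        rw [hg (n+1), hg n, hgall (w (n+1+1)), hgall (w (n+1))]
      · have hginv := hgg g hgc
        have hf : ∀ p, w (p+1) = g (w p) := by
          intro p
          rw [hg p, hginv]
        exact absurd (periodic_of_forward g hf) haper
    · push_neg at hback
      obtain ⟨p, p', hwss, hwpp⟩ := hback
      obtain ⟨e, he1, he2⟩ := hcond p
      obtain ⟨e', he1', he2'⟩ := hcond p'
      have hee : e = e' := hdet p p' e e' hwss he2 he2'
      -- (T') : ∀ i, c ≤ i < m → E 0 i = E 1 i
      have hT : ∀ i, c ≤ i → i < m → E 0 i = E 1 i := by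
        intro i hi him
        have h1 := he1 (i - c) (by omega)
        have h2 := he1' (i - c) (by omega)
        rw [hee] at h1
        have h3 := h1.symm.trans h2
        rw [show i - c + c = i by omega] at h3
        rcases hne2 _ _ hwpp with ⟨ha, hb⟩ | ⟨ha, hb⟩
        · rw [ha, hb] at h3; exact h3
        · rw [ha, hb] at h3; exact h3.symm
      -- wrap relations
      obtain ⟨q0', hq0ge, hq0⟩ := letter_occ hm hunif hfix hn 0 1
      obtain ⟨q1', hq1ge, hq1⟩ := letter_occ hm hunif hfix hn 1 1
      obtain ⟨q0, rfl⟩ : ∃ q, q0' = q + 1 := ⟨q0' - 1, by omega⟩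
      obtain ⟨q1, rfl⟩ : ∃ q, q1' = q + 1 := ⟨q1' - 1, by omega⟩
      obtain ⟨e0, _, he02⟩ := hcond q0
      obtain ⟨e1, _, he12⟩ := hcond q1
      rw [hq0] at he02
      rw [hq1] at he12
      -- downward induction with measure m - j
      have hdown : ∀ k j, j < m → m - j ≤ k → E 0 j = E 1 j := by
        intro k
        induction k with
        | zero => intro j hj hk; omega
        | succ k IH =>
          intro j hjm hk
          by_cases hjc : c ≤ j
          · exact hT j hjc hjm
          · push_neg at hjc
            set j' := j + m - c with hj'def
            have hj'm : j' < m := by omega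
            have hj'c : m ≤ j' + c := by omega
            have h0 := he02 j' hj'c hj'm
            have h1 := he12 j' hj'c hj'm
            rw [show j' + c - m = j by omega] at h0 h1
            have hIH : E 0 j' = E 1 j' := IH j' hj'm (by omega)
            have hee0 : ∀ e : Fin 2, E e j' = E 0 j' := by
              intro e; fin_cases e
              · rfl
              · exact hIH.symm
            rw [← h0, ← h1, hee0 e0, hee0 e1]
      intro j hjm
      exact hdown m j hjm (by omega)

end APaux4


namespace APaux5
open APaux APaux2 APaux3 APaux4

variable {σ : Fin 2 → List (Fin 2)} {m : ℕ} {w : ℕ → Fin 2}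

def req (m L : ℕ) : ℕ → ℕ
  | 0 => L
  | t+1 => m * (req m L t + 2)

theorem le_req (hm : 2 ≤ m) (L : ℕ) : ∀ t, L ≤ req m L t := by
  intro t
  induction t with
  | zero => exact le_refl _
  | succ t ih =>
      have h1 : 1 * (req m L t + 2) ≤ m * (req m L t + 2) :=
        Nat.mul_le_mul_right _ (by omega)
      have : req m L (t+1) = m * (req m L t + 2) := rfl
      omega

theorem req_le (hm : 2 ≤ m) (L : ℕ) : ∀ t, req m L t + 4*m ≤ (L + 4*m) * m ^ t := by
  intro t
  induction t with
  | zero => show L + 4*m ≤ (L + 4*m) * m ^ 0; simp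
  | succ t ih =>
      have h1 : m * (req m L t + 4*m) ≤ m * ((L + 4*m) * m ^ t) := Nat.mul_le_mul_left m ih
      have h2 : m * ((L + 4*m) * m ^ t) = (L + 4*m) * m ^ (t+1) := by rw [pow_succ]; ring
      have h3 : req m L (t+1) = m * req m L t + 2*m := by
        show m * (req m L t + 2) = _; ring
      have h4 : m * (req m L t + 4*m) = m * req m L t + 4*(m*m) := by ring
      have h5 : 6*m ≤ 4*(m*m) := by nlinarith
      omega

theorem descend (hm : 2 ≤ m) (hunif : IsUniform σ m) (hfix : substInf σ m w = w)
    (haper : IsAperiodic w) (x δ₁ ℓ : ℕ)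
    (hag : ∀ i, i < ℓ → w (x + i) = w (x + m * δ₁ + i)) :
    ∀ i, i < ℓ / m - 2 → w ((x/m+1) + i) = w ((x/m+1) + δ₁ + i) := by
  intro i hi
  rw [show (x/m+1) + δ₁ + i = ((x/m+1) + i) + δ₁ from by omega]
  have hdivx := Nat.div_add_mod x m
  have hxmod : x % m < m := Nat.mod_lt _ (by omega)
  have hdivl := Nat.div_add_mod ℓ m
  have hlmod : ℓ % m < m := Nat.mod_lt _ (by omega)
  apply sigma_inj hm hfix haper
  apply list_ext_E hunif
  intro j hj
  set q := x/m + 1 + i with hq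
  have hmq1 : m * q = m * (x/m) + m + m * i := by rw [hq]; ring
  have hmi : m * (i + 3) ≤ m * (ℓ / m) := Nat.mul_le_mul_left m (by omega)
  have hmi2 : m * (i + 3) = m * i + 3 * m := by ring
  have h1 : (σ (w q)).getD j default = w (m * q + j) := (point1 hm hfix q j hj).symm
  have h2 : w (m * q + j) = w (m * q + j + m * δ₁) := by
    have h3 := hag (m * q + j - x) (by omega)
    have heq1 : x + (m * q + j - x) = m * q + j := by omega
    have heq2 : x + m * δ₁ + (m * q + j - x) = m * q + j + m * δ₁ := by omega
    rw [heq1, heq2] at h3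
    exact h3
  have hmq2 : m * (q + δ₁) = m * q + m * δ₁ := by ring
  have h4 : w (m * q + j + m * δ₁) = (σ (w (q + δ₁))).getD j default := by
    rw [show m * q + j + m * δ₁ = m * (q + δ₁) + j by omega]
    exact point1 hm hfix (q + δ₁) j hj
  show (σ (w q)).getD j default = (σ (w (q + δ₁))).getD j default
  rw [h1, h2, h4]

theorem iterdvd (hm : 2 ≤ m) (hunif : IsUniform σ m) (hfix : substInf σ m w = w)
    (haper : IsAperiodic w) {L : ℕ}
    (hrecog : ∀ x δ ℓ, 1 ≤ δ → L ≤ ℓ →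
      (∀ i, i < ℓ → w (x + i) = w (x + δ + i)) → δ % m = 0) :
    ∀ t x δ ℓ, 1 ≤ δ → req m L t ≤ ℓ →
      (∀ i, i < ℓ → w (x + i) = w (x + δ + i)) → m ^ t ∣ δ := by
  intro t
  induction t with
  | zero => intro x δ ℓ _ _ _; simpa using Nat.one_dvd δ

  | succ t ih =>
      intro x δ ℓ hδ hreq hag
      have hLr : L ≤ req m L (t+1) := le_req hm L (t+1)
      have hmod := hrecog x δ ℓ hδ (by omega) hag
      obtain ⟨δ₁, rfl⟩ := Nat.dvd_of_mod_eq_zero hmod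
      have hδ₁ : 1 ≤ δ₁ := by
        rcases Nat.eq_zero_or_pos δ₁ with h | h
        · subst h; simp at hδ
        · exact h
      have hag' := descend hm hunif hfix haper x δ₁ ℓ hag
      have hreq' : req m L t ≤ ℓ / m - 2 := by
        have h1 : req m L (t+1) = m * (req m L t + 2) := rfl
        have h2 : req m L t + 2 ≤ ℓ / m := by
          rw [Nat.le_div_iff_mul_le (by omega : 0 < m)]
          calc (req m L t + 2) * m = m * (req m L t + 2) := by ring
          _ ≤ ℓ := by omega
        omega
      have hdvd := ih (x/m+1) δ₁ (ℓ/m - 2) hδ₁ hreq' hag'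
      obtain ⟨e, rfl⟩ := hdvd
      exact ⟨e, by rw [pow_succ]; ring⟩

theorem subword_getD {x : ℕ → Fin 2} (a d s : ℕ) (hs : s < d) :
    (subword x a d).getD s default = x (a + s) := by
  have hlen : (subword x a d).length = d := by simp [subword]
  rw [List.getD_eq_getElem _ _ (by rw [hlen]; exact hs)]
  simp [subword]

end APaux5

/-- Berger–Defant, Theorem 1: if `w` is an aperiodic fixed point of a primitive
binary `m`-uniform morphism (`m ≥ 2`), then there is a constant `C = C(w)` such that for all `n`
and `k ≥ 1`, `w` contains a `k`-anti-power with block length at most `C * k` starting at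
position `n`. -/
theorem antipowers_of_primitive_binary_uniform
    (σ : Fin 2 → List (Fin 2)) (m : ℕ) (hm : 2 ≤ m)
    (hunif : IsUniform σ m) (hprim : IsPrimitive σ)
    (w : ℕ → Fin 2) (hfix : substInf σ m w = w) (haper : IsAperiodic w) :
    ∃ C : ℕ, ∀ n k : ℕ, 1 ≤ k →
      ∃ d : ℕ, 1 ≤ d ∧ d ≤ C * k ∧ HasAntipower w n k d := by
  classical
  obtain ⟨n₀, hn₀1, hn⟩ := hprim
  obtain ⟨L, hL1, hrecog⟩ := APaux4.recog hm hunif hfix haper hn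
  refine ⟨(L + 4*m) * m + m + 2, fun n k hk => ?_⟩
  have hex : ∃ t, k ≤ m ^ t := by
    refine ⟨k, le_of_lt ?_⟩
    calc k < 2 ^ k := Nat.lt_two_pow_self (n := k)
    _ ≤ m ^ k := Nat.pow_le_pow_left hm k
  obtain ⟨t, ht, htk⟩ : ∃ t, k ≤ m ^ t ∧ m ^ t ≤ m * k := by
    refine ⟨Nat.find hex, Nat.find_spec hex, ?_⟩
    rcases Nat.eq_zero_or_pos (Nat.find hex) with h0 | hpos
    · rw [h0, pow_zero]; nlinarith
    · obtain ⟨s, hs⟩ : ∃ s, Nat.find hex = s + 1 := ⟨Nat.find hex - 1, by omega⟩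
      have hsm : ¬ k ≤ m ^ s := Nat.find_min hex (by omega)
      push_neg at hsm
      rw [hs]
      have h1 : m ^ (s+1) = m * m ^ s := by rw [pow_succ]; ring
      have h2 : m * m ^ s ≤ m * (k-1) := Nat.mul_le_mul_left m (by omega)
      have h3 : m * (k-1) ≤ m * k := Nat.mul_le_mul_left m (by omega)
      omega
  obtain ⟨r, hrreq⟩ : ∃ r, r = APaux5.req m L t := ⟨_, rfl⟩
  obtain ⟨d, hd⟩ : ∃ d, d = m * (r / m + 1) + 1 := ⟨_, rfl⟩
  have hrdiv := Nat.div_add_mod r m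
  have hrmod : r % m < m := Nat.mod_lt _ (by omega)
  have hmul : m * (r/m + 1) = m * (r/m) + m := by ring
  have hd1 : 1 ≤ d := by omega
  have hdr : r < d := by omega
  have hdC : d ≤ ((L + 4*m) * m + m + 2) * k := by
    have h1 := APaux5.req_le hm L t
    have h2 : (L+4*m) * m^t ≤ (L+4*m)*(m*k) := Nat.mul_le_mul_left _ htk
    have h3 : (L+4*m)*(m*k) = ((L+4*m)*m)*k := by ring
    have h4 : ((L+4*m)*m + m + 2) * k = ((L+4*m)*m)*k + (m+2)*k := by ring
    have h5 : (m+2) * 1 ≤ (m+2)*k := Nat.mul_le_mul_left _ hk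
    have h6 : m * (r/m) ≤ r := by omega
    omega
  have hmodd : d % m = 1 := by
    rw [hd, Nat.mul_add_mod, Nat.mod_eq_of_lt (by omega : (1:ℕ) < m)]
  have hcop : Nat.Coprime m d := by
    show Nat.gcd m d = 1
    rw [Nat.gcd_rec, hmodd, Nat.gcd_one_left]
  refine ⟨d, hd1, hdC, ?_⟩
  have key : ∀ i j, i < j → j < k →
      subword w (n + i*d) d = subword w (n + j*d) d → False := by
    intro i j hij hjk heq
    obtain ⟨e, rfl⟩ : ∃ e, j = i + e := ⟨j - i, by omega⟩
    have he1 : 1 ≤ e := by omega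
    have hjd : (i+e)*d = i*d + e*d := by ring
    have hag : ∀ s, s < d → w ((n + i*d) + s) = w ((n + i*d) + e*d + s) := by
      intro s hs
      have h1 := APaux5.subword_getD (x := w) (n + i*d) d s hs
      have h2 := APaux5.subword_getD (x := w) (n + (i+e)*d) d s hs
      rw [heq] at h1
      have h3 := h1.symm.trans h2
      rw [show (n + i*d) + e*d + s = n + (i+e)*d + s from by omega]
      exact h3
    have hdvd := APaux5.iterdvd hm hunif hfix haper hrecog t (n+i*d) (e*d) d
        (Nat.mul_pos (by omega) (by omega)) (by omega) hag
    have hcop' : Nat.Coprime (m ^ t) d := Nat.Coprime.pow_left t hcop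
    have hdvd' : m ^ t ∣ e := Nat.Coprime.dvd_of_dvd_mul_right hcop' hdvd
    have := Nat.le_of_dvd (by omega) hdvd'
    omega
  intro i hi j hj hne heq
  rcases lt_or_gt_of_ne hne with h | h
  · exact key i j h hj heq
  · exact key j i h hi heq.symm
end

section
/- Let w be an aperiodic infinite word over a two-letter alphabet that is a fixed point of an m-uniform morphism σ (m ≥ 2). Then w is uniformly recurrent if and only if σ is primitive. -/
/-- An infinite word is uniformly recurrent: for every factor `u` there is a length `L` such that
every factor of length `L` contains `u`. -/
def UniformlyRecurrent {A : Type*} (x : ℕ → A) : Prop :=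
  ∀ u : List A, FactorOf u x →
    ∃ L : ℕ, ∀ v : List A, FactorOf v x → v.length = L → u <:+: v

section Aux
variable {A : Type*}

lemma substWord_singleton (σ : A → List A) (c : A) : substWord σ [c] = σ c := by
  simp [substWord]

lemma iter_substWord_flatMap (σ : A → List A) (n : ℕ) (l : List A) :
    (substWord σ)^[n] l = l.flatMap (substIter σ n) := by
  induction n generalizing l with
  | zero =>
      simp only [Function.iterate_zero, id]
      induction l with
      | nil => rfl
      | cons c l ihl => rw [List.flatMap_cons, ← ihl]; rfl
  | succ n ih =>
      rw [Function.iterate_succ_apply, ih]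
      show (l.flatMap σ).flatMap _ = _
      rw [List.flatMap_assoc]
      congr 1
      funext c
      rw [substIter, Function.iterate_succ_apply, substWord_singleton, ih]

lemma substIter_succ (σ : A → List A) (n : ℕ) (c : A) :
    substIter σ (n+1) c = (σ c).flatMap (substIter σ n) := by
  rw [substIter, Function.iterate_succ_apply, substWord_singleton, iter_substWord_flatMap]

lemma length_substIter {σ : A → List A} {m : ℕ} (hunif : IsUniform σ m) (n : ℕ) (c : A) :
    (substIter σ n c).length = m ^ n := by
  induction n generalizing c with
  | zero => simp [substIter]
  | succ n ih =>
      rw [substIter_succ]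
      have : ∀ l : List A, (l.flatMap (substIter σ n)).length = l.length * m ^ n := by
        intro l
        induction l with
        | nil => simp
        | cons d l ihl => simp [ihl, ih]; ring
      rw [this, hunif, pow_succ, mul_comm]

lemma getD_flatMap_uniform {M : ℕ} (g : A → List A)
    (hg : ∀ c, (g c).length = M) (d : A) :
    ∀ (l : List A) (s t : ℕ), s < l.length → t < M →
      (l.flatMap g).getD (s * M + t) d = (g (l.getD s d)).getD t d := by
  intro l
  induction l with
  | nil => intro s t hs ht; simp at hs
  | cons c l ih =>
      intro s t hs ht
      rw [List.flatMap_cons]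
      match s with
      | 0 =>
          rw [List.getD_append _ _ _ _ (by rw [hg]; omega)]
          simp
      | s + 1 =>
          have h1 : (g c).length ≤ (s+1) * M + t := by
            rw [hg]; nlinarith
          rw [List.getD_append_right _ _ _ _ h1, hg]
          have h2 : (s+1) * M + t - M = s * M + t := by ring_nf; omega
          rw [h2, ih s t (by simpa using hs) ht]
          simp

lemma subword_length (x : ℕ → A) (i len : ℕ) : (subword x i len).length = len := by
  simp [subword]

lemma subword_getElem (x : ℕ → A) (i len j : ℕ) (hj : j < len) :
    (subword x i len)[j]'(by simp [subword]; omega) = x (i + j) := by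
  simp [subword]

lemma subword_append (x : ℕ → A) (i l1 l2 : ℕ) :
    subword x i (l1 + l2) = subword x i l1 ++ subword x (i + l1) l2 := by
  unfold subword
  rw [List.range_add, List.map_append, List.map_map]
  congr 1
  apply List.map_congr_left
  intro j _
  simp [add_assoc]

end Aux

section Fix
variable {σ : Fin 2 → List (Fin 2)} {m : ℕ} {w : ℕ → Fin 2}

lemma weval (hm : 2 ≤ m) (hfix : substInf σ m w = w) (q r : ℕ) (hr : r < m) :
    w (q * m + r) = (σ (w q)).getD r default := by
  have := congrFun hfix (q * m + r)
  rw [← this]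
  unfold substInf
  have h1 : (q * m + r) / m = q := by
    rw [mul_comm, Nat.mul_add_div (by omega), Nat.div_eq_of_lt hr, add_zero]
  have h2 : (q * m + r) % m = r := by
    rw [mul_comm, Nat.mul_add_mod, Nat.mod_eq_of_lt hr]
  rw [h1, h2]

lemma wblock (hm : 2 ≤ m) (hunif : IsUniform σ m) (hfix : substInf σ m w = w)
    (n : ℕ) : ∀ (i r : ℕ), r < m ^ n →
    w (i * m ^ n + r) = (substIter σ n (w i)).getD r default := by
  induction n with
  | zero =>
      intro i r hr
      have h0 : r = 0 := by simpa using hr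
      subst h0
      simp [substIter]
  | succ n ih =>
      intro i r hr
      set M := m ^ n with hM
      set s := r / M with hs
      set t := r % M with ht
      have hMpos : 0 < M := by positivity
      have hsm : s < m := by
        apply Nat.div_lt_of_lt_mul
        rw [mul_comm]
        calc r < m ^ (n+1) := hr
        _ = m * M := by rw [hM, pow_succ]; ring
      have htM : t < M := Nat.mod_lt _ hMpos
      have hrst : r = s * M + t := by
        rw [hs, ht, mul_comm]; exact (Nat.div_add_mod r M).symm
      have harith : i * m ^ (n+1) + r = (i * m + s) * M + t := by
        rw [hrst, hM, pow_succ]; ring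
      rw [harith, ih (i * m + s) t htM, weval hm hfix i s hsm,
        substIter_succ, hrst]
      have hslen : s < (σ (w i)).length := by rw [hunif]; exact hsm
      rw [getD_flatMap_uniform (substIter σ n) (fun c => length_substIter hunif n c)
        default (σ (w i)) s t hslen htM]

lemma subword_block (hm : 2 ≤ m) (hunif : IsUniform σ m) (hfix : substInf σ m w = w)
    (n i : ℕ) : subword w (i * m ^ n) (m ^ n) = substIter σ n (w i) := by
  apply List.ext_getElem
  · rw [subword_length, length_substIter hunif]
  · intro j h1 h2
    rw [subword_getElem _ _ _ _ (by simpa [subword_length] using h1)]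
    rw [← List.getD_eq_getElem _ default h2]
    exact wblock hm hunif hfix n i j (by rwa [length_substIter hunif] at h2)

end Fix

lemma infix_flatMap {A : Type*} (g : A → List A) {a : A} {l : List A} (h : a ∈ l) :
    g a <:+: l.flatMap g := by
  obtain ⟨s, t, rfl⟩ := List.append_of_mem h
  exact ⟨s.flatMap g, t.flatMap g, by simp⟩

lemma subword_infix {A : Type*} (x : ℕ → A) {i len j len' : ℕ}
    (h1 : j ≤ i) (h2 : i + len ≤ j + len') :
    subword x i len <:+: subword x j len' := by
  set d1 := i - j with hd1
  set d2 := j + len' - i - len with hd2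
  have e : len' = d1 + (len + d2) := by omega
  have e2 : subword x j len' =
      subword x j d1 ++ (subword x (j + d1) len ++ subword x (j + d1 + len) d2) := by
    rw [e, subword_append, subword_append]
  rw [show j + d1 = i by omega] at e2
  exact ⟨subword x j d1, subword x (i + len) d2, by rw [e2, List.append_assoc]⟩

lemma UR_of_prim {σ : Fin 2 → List (Fin 2)} {m : ℕ} {w : ℕ → Fin 2}
    (hm : 2 ≤ m) (hunif : IsUniform σ m) (hfix : substInf σ m w = w)
    (hprim : IsPrimitive σ) : UniformlyRecurrent w := by
  obtain ⟨p, hp1, hp⟩ := hprim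
  rintro u ⟨i0, hu⟩
  set n := i0 + u.length with hn
  have hK : i0 + u.length < m ^ n := Nat.lt_pow_self (by omega : 1 < m)
  set N := n + p with hN
  set M := m ^ N with hMdef
  have hMpos : 0 < M := by positivity
  have hstep1 : u <:+: substIter σ n (w 0) := by
    have hb : substIter σ n (w 0) = subword w 0 (m ^ n) := by
      have := subword_block hm hunif hfix n 0
      simpa using this.symm
    rw [hb, ← hu]
    exact subword_infix w (by omega) (by omega)
  have hstep2 : ∀ c, substIter σ n (w 0) <:+: substIter σ N c := by
    intro c
    have hEq : substIter σ N c = (substIter σ p c).flatMap (substIter σ n) := by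
      rw [substIter, hN, Function.iterate_add_apply, ← substIter,
        iter_substWord_flatMap]
    rw [hEq]
    exact infix_flatMap _ (hp c (w 0))
  refine ⟨2 * M, ?_⟩
  rintro v ⟨j, hv⟩ hvlen
  rw [hvlen] at hv
  set q := j / M + 1 with hq
  have hdm := Nat.div_add_mod j M
  have hmod : j % M < M := Nat.mod_lt j hMpos
  have hqM : q * M = M * (j / M) + M := by rw [hq]; ring
  have hq1 : j ≤ q * M := by linarith
  have hq2 : q * M + M ≤ j + 2 * M := by
    have h0 : 0 ≤ j % M := Nat.zero_le _
    linarith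
  have hblock : subword w (q * M) M = substIter σ N (w q) :=
    subword_block hm hunif hfix N q
  have hinfix : subword w (q * M) M <:+: v := by
    rw [← hv]
    exact subword_infix w hq1 hq2
  have hchain : u <:+: substIter σ N (w q) := (hstep1).trans (hstep2 (w q))
  rw [← hblock] at hchain
  exact hchain.trans hinfix

/-- Remark 3: an aperiodic binary fixed point `w` of an `m`-uniform morphism `σ`
(`m ≥ 2`) is uniformly recurrent if and only if `σ` is primitive. -/
theorem uniformlyRecurrent_iff_primitive
    (σ : Fin 2 → List (Fin 2)) (m : ℕ) (hm : 2 ≤ m) (hunif : IsUniform σ m)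
    (w : ℕ → Fin 2) (hfix : substInf σ m w = w) (haper : IsAperiodic w) :
    UniformlyRecurrent w ↔ IsPrimitive σ := by
  have fin2 : ∀ x y : Fin 2, x ≠ y → x = y + 1 := by decide
  set a := w 0 with ha
  have hevala : ∀ q r, r < m → w (q * m + r) = (σ (w q)).getD r default :=
    weval hm hfix
  have hhead : (σ a).getD 0 default = a := by
    have := hevala 0 0 (by omega)
    simpa using this.symm
  have hlen : ∀ c, 0 < (σ c).length := fun c => by rw [hunif]; omega
  have hamem : a ∈ σ a := by
    have hmem : (σ a).getD 0 default ∈ σ a := by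
      rw [List.getD_eq_getElem _ _ (hlen a)]
      exact List.getElem_mem _
    rwa [hhead] at hmem
  have hconst : ∀ c : Fin 2, (∀ n, w n = c) → False := by
    intro c hc
    exact haper ⟨1, le_refl 1, 0, fun n _ => by rw [hc, hc]⟩
  have hbmem : ∃ x ∈ σ a, x ≠ a := by
    by_contra hno
    push_neg at hno
    apply hconst a
    intro n
    induction n using Nat.strong_induction_on with
    | _ n ih =>
      match n, ih with
      | 0, _ => rfl
      | (k+1), ih =>
        have hd : (k+1) / m < k+1 := Nat.div_lt_self (by omega) (by omega)
        have heq := hevala ((k+1)/m) ((k+1)%m) (Nat.mod_lt _ (by omega))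
        rw [Nat.div_add_mod'] at heq
        rw [heq, ih ((k+1)/m) hd]
        have hr : (k+1) % m < (σ a).length := by
          rw [hunif]; exact Nat.mod_lt _ (by omega)
        rw [List.getD_eq_getElem _ _ hr]
        exact hno _ (List.getElem_mem _)
  obtain ⟨b, hbσ, hbne⟩ := hbmem
  have hab : ∀ x : Fin 2, x = a ∨ x = b := by
    intro x
    rcases eq_or_ne x a with h | h
    · left; exact h
    · right; rw [fin2 b a hbne]; exact fin2 x a h
  by_cases hba : a ∈ σ b
  · have h1iter : ∀ x : Fin 2, substIter σ 1 x = σ x := by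
      intro x
      rw [substIter_succ]
      rw [show substIter σ 0 = fun e : Fin 2 => [e] from rfl]
      simp
    have hprim : IsPrimitive σ := by
      refine ⟨2, by omega, ?_⟩
      intro c d
      have h2 : substIter σ 2 c = (σ c).flatMap σ := by
        have hs : substIter σ 2 c = (σ c).flatMap (substIter σ 1) :=
          substIter_succ σ 1 c
        rw [hs, show substIter σ 1 = σ from funext h1iter]
      rw [h2, List.mem_flatMap]
      refine ⟨a, ?_, ?_⟩
      · rcases hab c with h | h
        · rw [h]; exact hamem
        · rw [h]; exact hba
      · rcases hab d with h | h
        · rw [h]; exact hamem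
        · rw [h]; exact hbσ
    exact ⟨fun _ => hprim, fun _ => UR_of_prim hm hunif hfix hprim⟩
  · have hσb : ∀ x ∈ σ b, x = b := by
      intro x hx
      rcases hab x with h | h
      · exact absurd (h ▸ hx) hba
      · exact h
    have hiterb : ∀ n, ∀ x ∈ substIter σ n b, x = b := by
      intro n
      induction n with
      | zero =>
          intro x hx
          have hx' : x ∈ ([b] : List (Fin 2)) := hx
          simpa using hx'
      | succ n ih =>
          intro x hx
          rw [substIter_succ, List.mem_flatMap] at hx
          obtain ⟨e, he, hx⟩ := hx
          rw [hσb e he] at hx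
          exact ih x hx
    have hnprim : ¬ IsPrimitive σ := by
      rintro ⟨n, hn1, hn⟩
      exact hbne (hiterb n a (hn b a)).symm
    have hbocc : ∃ i, w i = b := by
      by_contra hno
      push_neg at hno
      apply hconst a
      intro n
      rcases hab (w n) with h | h
      · exact h
      · exact absurd h (hno n)
    obtain ⟨i, hib⟩ := hbocc
    have hnUR : ¬ UniformlyRecurrent w := by
      intro hUR
      obtain ⟨L, hL⟩ := hUR [a] ⟨0, rfl⟩
      have hLn : L < m ^ L := Nat.lt_pow_self (by omega : 1 < m)
      set v := subword w (i * m ^ L) L with hvdef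
      have hvfac : FactorOf v w := ⟨i * m ^ L, by rw [subword_length]⟩
      have hav : a ∈ v := by
        obtain ⟨s, t, hst⟩ := hL v hvfac (subword_length _ _ _)
        rw [← hst]; simp
      obtain ⟨j, hj, hval⟩ := List.mem_iff_getElem.mp hav
      rw [subword_length] at hj
      have hval' : w (i * m ^ L + j) = a := by
        rw [← hval]
        exact (subword_getElem w (i * m ^ L) L j hj).symm
      have hwb : w (i * m ^ L + j) = b := by
        rw [wblock hm hunif hfix L i j (by omega), hib]
        have hjlen : j < (substIter σ L b).length := by
          rw [length_substIter hunif]; omega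
        rw [List.getD_eq_getElem _ _ hjlen]
        exact hiterb L _ (List.getElem_mem _)
      rw [hwb] at hval'
      exact hbne hval'
    exact ⟨fun h => absurd h hnUR, fun h => absurd h hnprim⟩
end

section
/- Let σ be the 3-uniform morphism on {0, 1} with σ(0) = 010 and σ(1) = 111, and let c = σ^∞(0) be its fixed point starting with 0 (the Cantor word). Then there is no constant C such that for all n ∈ ℕ and k ≥ 1, c contains a k-anti-power with block length at most C·k starting at position n; that is, the conclusion of the main anti-power theorem fails for this non-primitive substitution. -/
/-- The Cantor substitution `0 ↦ 010`, `1 ↦ 111`. -/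
def cantorSubst : Fin 2 → List (Fin 2) :=
  ![[0, 1, 0], [1, 1, 1]]

section CantorAux

lemma cantor_step (c : ℕ → Fin 2) (hfix : substInf cantorSubst 3 c = c)
    (n : ℕ) (h : c (n / 3) = 1) : c n = 1 := by
  have := congrFun hfix n
  rw [← this]
  unfold substInf
  rw [h]
  have : n % 3 < 3 := Nat.mod_lt _ (by norm_num)
  interval_cases h3 : n % 3 <;> simp [cantorSubst]

lemma cantor_ones (c : ℕ → Fin 2) (hfix : substInf cantorSubst 3 c = c)
    (h0 : c 0 = 0) : ∀ m j, 3 ^ m ≤ j → j < 2 * 3 ^ m → c j = 1 := by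
  intro m
  induction m with
  | zero =>
    intro j h1 h2
    have : j = 1 := by omega
    subst this
    have := congrFun hfix 1
    rw [← this]
    unfold substInf
    norm_num
    rw [h0]
    simp [cantorSubst]
  | succ m ih =>
    intro j h1 h2
    apply cantor_step c hfix
    apply ih
    · rw [pow_succ] at h1; omega
    · rw [pow_succ] at h2; omega

end CantorAux

/-- second example in the Conclusion: for the Cantor word `c = σ^∞(0)`, the
fixed point starting with `0` of the non-primitive `3`-uniform morphism `0 ↦ 010`, `1 ↦ 111`,
the conclusion of the main theorem fails: there is no constant `C` such that for all `n` and
`k ≥ 1`, `c` contains a `k`-anti-power with block length at most `C * k` starting at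
position `n`. -/
theorem cantor_no_linear_antipowers
    (c : ℕ → Fin 2) (hfix : substInf cantorSubst 3 c = c) (h0 : c 0 = 0) :
    ¬ ∃ C : ℕ, ∀ n k : ℕ, 1 ≤ k →
      ∃ d : ℕ, 1 ≤ d ∧ d ≤ C * k ∧ HasAntipower c n k d := by
  rintro ⟨C, hC⟩
  -- choose m with 4 * C ≤ 3 ^ m
  obtain ⟨m, hm⟩ : ∃ m : ℕ, 4 * C ≤ 3 ^ m := ⟨4 * C, le_of_lt (Nat.lt_pow_self (by norm_num))⟩
  set n := 3 ^ m with hn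
  obtain ⟨d, hd1, hd2, hap⟩ := hC n 2 (by norm_num)
  have hones : ∀ j, n ≤ j → j < 2 * n → c j = 1 := cantor_ones c hfix h0 m
  have key : subword c (n + 0 * d) d = subword c (n + 1 * d) d := by
    unfold subword
    apply List.map_congr_left
    intro a ha
    have ha' : a < d := List.mem_range.mp ha
    have e1 : c (n + 0 * d + a) = 1 := hones _ (by omega) (by omega)
    have e2 : c (n + 1 * d + a) = 1 := hones _ (by omega) (by omega)
    rw [e1, e2]
  exact hap 0 (by norm_num) 1 (by norm_num) (by norm_num) key
end
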